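/- arXiv:2010.07334 — 5 statements merged into one kernel-verified Lean document; each statement's English description precedes it below -/
import Mathlib

section
/- Let f : ℝ^n → ℝ be differentiable with L-Lipschitz gradient and satisfy the Polyak–Łojasiewicz condition with constant μ > 0, and assume the set X* of global minimizers of f is nonempty. Then f satisfies the Error Bound condition with constant μ: for every x, ‖∇f(x)‖ ≥ μ·‖x_p − x‖, where x_p is the projection of x onto X* (i.e., ‖x_p − x‖ = dist(x, X*)). -/
open Metric Filter

/-- Core lemma: quadratic-growth-type bound via a compactness (finite-dimensional
Ekeland-style) argument. -/
lemma qg_aux (n : ℕ) (f : EuclideanSpace ℝ (Fin n) → ℝ)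
    (μ : ℝ) (hμ : 0 < μ)
    (hdiff : Differentiable ℝ f)
    (fstar : ℝ) (hlb : ∀ z, fstar ≤ f z)
    (hPL : ∀ x, μ * (f x - fstar) ≤ (1 / 2) * ‖gradient f x‖ ^ 2)
    (Xstar : Set (EuclideanSpace ℝ (Fin n))) (hXstar : Xstar = {z | f z = fstar})
    (x : EuclideanSpace ℝ (Fin n)) (δ : ℝ) (hδ0 : 0 < δ) (hδ : δ ^ 2 < μ / 2) :
    Metric.infDist x Xstar ≤ Real.sqrt (f x - fstar) / δ := by
  set g : EuclideanSpace ℝ (Fin n) → ℝ := fun z => Real.sqrt (f z - fstar) with hg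
  have hgc : Continuous g := by
    exact Real.continuous_sqrt.comp ((hdiff.continuous).sub continuous_const)
  have hgnn : ∀ z, 0 ≤ g z := fun z => Real.sqrt_nonneg _
  set h : EuclideanSpace ℝ (Fin n) → ℝ := fun z => g z + δ * ‖z - x‖ with hh
  have hhc : Continuous h := by
    exact hgc.add (continuous_const.mul ((continuous_id.sub continuous_const).norm))
  set R : ℝ := g x / δ with hR
  have hR0 : 0 ≤ R := div_nonneg (hgnn x) hδ0.le
  have hxK : x ∈ closedBall x R := by simp [hR0]
  obtain ⟨y, hyK, hymin⟩ := (isCompact_closedBall x R).exists_isMinOn ⟨x, hxK⟩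
    hhc.continuousOn
  -- y is a global minimizer of h
  have hglobal : ∀ z, h y ≤ h z := by
    intro z
    by_cases hz : z ∈ closedBall x R
    · exact hymin hz
    · have hz' : R < ‖z - x‖ := by
        simpa [mem_closedBall, dist_eq_norm] using hz
      have h1 : h y ≤ h x := hymin hxK
      have h2 : h x = g x := by simp [hh]
      have h3 : g x = δ * R := by
        rw [hR]; field_simp
      have : δ * R < δ * ‖z - x‖ := by exact (mul_lt_mul_iff_right₀ hδ0).2 hz'
      have h4 : h x < h z := by
        have := add_le_add (hgnn z) (le_of_lt this)
        calc h x = g x := h2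
        _ = δ * R := h3
        _ < δ * ‖z - x‖ := (mul_lt_mul_iff_right₀ hδ0).2 hz'
        _ ≤ g z + δ * ‖z - x‖ := le_add_of_nonneg_left (hgnn z)
        _ = h z := rfl
      exact h1.trans h4.le
  -- the minimizer satisfies f y = fstar
  have hfy : f y = fstar := by
    by_contra hne
    have ha : 0 < f y - fstar := lt_of_le_of_ne (sub_nonneg.2 (hlb y))
      (fun e => hne (by linarith [e]))
    set a : ℝ := f y - fstar with haa
    set G : EuclideanSpace ℝ (Fin n) := gradient f y with hG
    have hGsq : 2 * μ * a ≤ ‖G‖ ^ 2 := by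
      have := hPL y
      nlinarith
    have hGpos : 0 < ‖G‖ := by
      have h' : 0 < ‖G‖ ^ 2 := lt_of_lt_of_le (by positivity) hGsq
      nlinarith [norm_nonneg G]
    set u : EuclideanSpace ℝ (Fin n) := -(‖G‖⁻¹ • G) with hu
    -- derivative of t ↦ f (y + t • u) at 0 is ⟪G, u⟫ = -‖G‖
    have hline : HasDerivAt (fun t : ℝ => y + t • u) u 0 := by
      simpa using ((hasDerivAt_id (0:ℝ)).smul_const u).const_add y
    have hfd : HasFDerivAt f (InnerProductSpace.toDual ℝ _ G) y :=
      ((hdiff y).hasGradientAt).hasFDerivAt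
    have hcomp : HasDerivAt (fun t : ℝ => f (y + t • u)) (-‖G‖) 0 := by
      have hfd' : HasFDerivAt f (InnerProductSpace.toDual ℝ _ G)
          ((fun t : ℝ => y + t • u) 0) := by simpa using hfd
      have := hfd'.comp_hasDerivAt (0:ℝ) hline
      have hval : (InnerProductSpace.toDual ℝ _ G) u = -‖G‖ := by
        rw [hu, map_neg, map_smul, InnerProductSpace.toDual_apply_apply,
          real_inner_self_eq_norm_sq, smul_eq_mul]
        rw [pow_two, ← mul_assoc, inv_mul_cancel₀ hGpos.ne', one_mul]
      rw [hval] at this; exact this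
    -- derivative of ψ : t ↦ g (y + t • u) at 0
    have hsub : HasDerivAt (fun t : ℝ => f (y + t • u) - fstar) (-‖G‖) 0 :=
      hcomp.sub_const fstar
    have hsqrt : HasDerivAt Real.sqrt (1 / (2 * Real.sqrt a)) a :=
      Real.hasDerivAt_sqrt ha.ne'
    have hψ : HasDerivAt (fun t : ℝ => g (y + t • u))
        (1 / (2 * Real.sqrt a) * (-‖G‖)) 0 := by
      have hsqrt' : HasDerivAt Real.sqrt (1 / (2 * Real.sqrt a))
          ((fun t : ℝ => f (y + t • u) - fstar) 0) := by
        simpa [haa] using hsqrt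
      have := hsqrt'.comp (0:ℝ) hsub
      exact this
    -- slope inequality from minimality
    have hun : ‖u‖ = 1 := by
      simp [hu, norm_smul, abs_of_nonneg (inv_nonneg.2 hGpos.le)]
      field_simp
    have hslope : ∀ t : ℝ, 0 < t → -δ ≤ (g (y + t • u) - g y) / t := by
      intro t ht
      have h1 := hglobal (y + t • u)
      have h2 : ‖y + t • u - x‖ ≤ ‖y - x‖ + t := by
        calc ‖y + t • u - x‖ = ‖(y - x) + t • u‖ := by rw [add_sub_right_comm]
        _ ≤ ‖y - x‖ + ‖t • u‖ := norm_add_le _ _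
        _ = ‖y - x‖ + t := by simp [norm_smul, hun, abs_of_pos ht]
      have h3 : g y ≤ g (y + t • u) + δ * t := by
        have : g y + δ * ‖y - x‖ ≤ g (y + t • u) + δ * ‖y + t • u - x‖ := h1
        nlinarith [this, h2, hδ0]
      rw [le_div_iff₀ ht]
      linarith
    have hψbound : -δ ≤ 1 / (2 * Real.sqrt a) * (-‖G‖) := by
      have htend := hasDerivAt_iff_tendsto_slope.1 hψ
      have htend' : Tendsto (slope (fun t : ℝ => g (y + t • u)) 0)
          (nhdsWithin 0 (Set.Ioi 0)) (nhds (1 / (2 * Real.sqrt a) * (-‖G‖))) :=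
        htend.mono_left (nhdsWithin_mono _ (fun t ht => Set.mem_compl_singleton_iff.2
          (ne_of_gt ht)))
      refine ge_of_tendsto htend' ?_
      filter_upwards [self_mem_nhdsWithin] with t ht
      have h' := hslope t ht
      rw [slope_def_field]
      simpa using h'
    -- derive contradiction
    have hsa : 0 < Real.sqrt a := Real.sqrt_pos.2 ha
    have hGle : ‖G‖ ≤ 2 * δ * Real.sqrt a := by
      have := hψbound
      rw [div_mul_eq_mul_div, le_div_iff₀ (by positivity)] at this
      nlinarith
    have hsasq : Real.sqrt a ^ 2 = a := Real.sq_sqrt ha.le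
    nlinarith [hGsq, hGle, hGpos, hsa, hδ0]
  -- conclude
  have hyX : y ∈ Xstar := by rw [hXstar]; exact hfy
  have hd : δ * ‖y - x‖ ≤ g x := by
    have h1 : h y ≤ h x := hymin hxK
    have h2 : h x = g x := by simp [hh]
    have h3 : h y = δ * ‖y - x‖ := by simp [hh, hg, hfy]
    linarith
  calc Metric.infDist x Xstar ≤ dist x y := Metric.infDist_le_dist_of_mem hyX
  _ = ‖y - x‖ := by rw [dist_eq_norm, norm_sub_rev]
  _ ≤ g x / δ := by rw [le_div_iff₀ hδ0]; linarith [hd]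

/-- A differentiable function with `L`-Lipschitz gradient satisfying the PL
condition with constant `μ` satisfies the Error Bound condition with constant `μ`:
`‖∇f(x)‖ ≥ μ‖x_p − x‖` where `x_p` is the projection of `x` onto the set of global
minimizers. -/
theorem pl_implies_error_bound (n : ℕ) (f : EuclideanSpace ℝ (Fin n) → ℝ)
    (L μ : ℝ) (hμ : 0 < μ)
    (hdiff : Differentiable ℝ f)
    (hLip : ∀ x₁ x₂, ‖gradient f x₁ - gradient f x₂‖ ≤ L * ‖x₁ - x₂‖)
    (fstar : ℝ) (hfstar : IsLeast (Set.range f) fstar)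
    (hPL : ∀ x, μ * (f x - fstar) ≤ (1 / 2) * ‖gradient f x‖ ^ 2)
    (Xstar : Set (EuclideanSpace ℝ (Fin n))) (hXstar : Xstar = {z | f z = fstar})
    (hXne : Xstar.Nonempty)
    (x xp : EuclideanSpace ℝ (Fin n)) (hxp : xp ∈ Xstar)
    (hproj : ‖xp - x‖ = Metric.infDist x Xstar) :
    μ * ‖xp - x‖ ≤ ‖gradient f x‖ := by
  have hlb : ∀ z, fstar ≤ f z := fun z => hfstar.2 ⟨z, rfl⟩
  set D : ℝ := ‖xp - x‖ with hD
  have hD0 : 0 ≤ D := norm_nonneg _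
  set gx : ℝ := Real.sqrt (f x - fstar) with hgx
  -- first: √(μ/2) * D ≤ gx
  have hroot : 0 < Real.sqrt (μ / 2) := Real.sqrt_pos.2 (by linarith)
  have key : Real.sqrt (μ / 2) * D ≤ gx := by
    rcases eq_or_lt_of_le hD0 with hD0' | hDpos
    · rw [← hD0', mul_zero]; exact Real.sqrt_nonneg _
    by_contra hcon
    push_neg at hcon
    have hgxD : gx / D < Real.sqrt (μ / 2) := by
      rw [div_lt_iff₀ hDpos]; linarith
    obtain ⟨δ, hδ1, hδ2⟩ := exists_between hgxD
    have hδ0 : 0 < δ := lt_of_le_of_lt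
      (div_nonneg (Real.sqrt_nonneg _) hD0) hδ1
    have hsq : Real.sqrt (μ / 2) ^ 2 = μ / 2 := Real.sq_sqrt (by linarith)
    have hδsq : δ ^ 2 < μ / 2 := by nlinarith [Real.sqrt_nonneg (μ/2)]
    have hqg0 := qg_aux n f μ hμ hdiff fstar hlb hPL Xstar hXstar x δ hδ0 hδsq
    have hqg : D * δ ≤ gx := by
      have hproj' : ‖xp - x‖ = Metric.infDist x Xstar := by rw [← hD]; exact hproj
      rw [← le_div_iff₀ hδ0, hD, hgx, hproj']; exact hqg0
    have : δ ≤ gx / D := (le_div_iff₀ hDpos).2 (by nlinarith [hqg])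
    linarith
  -- now: μ * D = √(2μ) * √(μ/2) * D ≤ √(2μ) * gx = √(2μ(f x - fstar)) ≤ ‖∇f x‖
  have hPLx := hPL x
  have hgrad : Real.sqrt (2 * μ) * gx ≤ ‖gradient f x‖ := by
    have h1 : Real.sqrt (2 * μ) * gx = Real.sqrt (2 * μ * (f x - fstar)) := by
      rw [hgx, ← Real.sqrt_mul (by linarith)]
    have h2 : 2 * μ * (f x - fstar) ≤ ‖gradient f x‖ ^ 2 := by nlinarith
    rw [h1]
    calc Real.sqrt (2 * μ * (f x - fstar)) ≤ Real.sqrt (‖gradient f x‖ ^ 2) :=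
      Real.sqrt_le_sqrt h2
    _ = ‖gradient f x‖ := by rw [Real.sqrt_sq (norm_nonneg _)]
  have hmul : Real.sqrt (2 * μ) * Real.sqrt (μ / 2) = μ := by
    rw [← Real.sqrt_mul (by linarith)]
    rw [show 2 * μ * (μ / 2) = μ ^ 2 by ring, Real.sqrt_sq hμ.le]
  calc μ * D = Real.sqrt (2 * μ) * (Real.sqrt (μ / 2) * D) := by rw [← mul_assoc, hmul]
  _ ≤ Real.sqrt (2 * μ) * gx := by
      apply mul_le_mul_of_nonneg_left key (Real.sqrt_nonneg _)
  _ ≤ ‖gradient f x‖ := hgrad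
end

section
/- Let f : ℝ^n → ℝ be differentiable with L-Lipschitz gradient and satisfy the Polyak–Łojasiewicz condition with constant μ > 0, and assume the set X* of global minimizers of f is nonempty. Then f satisfies the Quadratic Growth condition with constant μ: for every x, f(x) − f* ≥ (μ/2)·‖x_p − x‖², where f* = min f and x_p is the projection of x onto X* (i.e., ‖x_p − x‖ = dist(x, X*)). -/
open Metric Set

/-- If `φ t ≥ φ 0 - K*t` for small `t > 0` and `φ` has derivative `D` at `0`, then `D ≥ -K`. -/
lemma deriv_ge_of_eventually (φ : ℝ → ℝ) (D K ε : ℝ) (hε : 0 < ε)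
    (hD : HasDerivAt φ D 0)
    (hbd : ∀ t, 0 < t → t < ε → φ 0 - K * t ≤ φ t) : -K ≤ D := by
  have hslope : Filter.Tendsto (slope φ 0) (nhdsWithin 0 {0}ᶜ) (nhds D) :=
    hasDerivAt_iff_tendsto_slope.1 hD
  have hslope' : Filter.Tendsto (slope φ 0) (nhdsWithin 0 (Ioi 0)) (nhds D) :=
    hslope.mono_left (nhdsWithin_mono 0 (fun t ht => ne_of_gt ht))
  refine ge_of_tendsto hslope' ?_
  filter_upwards [Ioo_mem_nhdsGT_of_mem (show (0:ℝ) ∈ Ico 0 ε from ⟨le_refl 0, hε⟩)]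
    with t ht
  rcases ht with ⟨ht0, htε⟩
  rw [slope_def_field]
  have := hbd t ht0 htε
  rw [le_div_iff₀ (by simpa using ht0)]
  nlinarith

lemma aux_s4 (a : ℝ) (ha : 0 < a) : (1 / (2 * Real.sqrt a)) ^ 2 * (4 * a) = 1 := by
  have e : Real.sqrt a ^ 2 = a := Real.sq_sqrt ha.le
  have h : 0 < Real.sqrt a := Real.sqrt_pos.2 ha
  field_simp
  nlinarith [e]

/-- A differentiable function with `L`-Lipschitz gradient satisfying the PL
condition with constant `μ` satisfies the Quadratic Growth condition with constant `μ`: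
`f(x) − f* ≥ (μ/2)‖x_p − x‖²` where `x_p` is the projection of `x` onto the set of global
minimizers. -/
theorem pl_implies_quadratic_growth (n : ℕ) (f : EuclideanSpace ℝ (Fin n) → ℝ)
    (L μ : ℝ) (hμ : 0 < μ)
    (hdiff : Differentiable ℝ f)
    (hLip : ∀ x₁ x₂, ‖gradient f x₁ - gradient f x₂‖ ≤ L * ‖x₁ - x₂‖)
    (fstar : ℝ) (hfstar : IsLeast (Set.range f) fstar)
    (hPL : ∀ x, μ * (f x - fstar) ≤ (1 / 2) * ‖gradient f x‖ ^ 2)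
    (Xstar : Set (EuclideanSpace ℝ (Fin n))) (hXstar : Xstar = {z | f z = fstar})
    (hXne : Xstar.Nonempty)
    (x xp : EuclideanSpace ℝ (Fin n)) (hxp : xp ∈ Xstar)
    (hproj : ‖xp - x‖ = Metric.infDist x Xstar) :
    (μ / 2) * ‖xp - x‖ ^ 2 ≤ f x - fstar := by
  have hfle : ∀ z, fstar ≤ f z := fun z => hfstar.2 ⟨z, rfl⟩
  by_contra hcon
  push_neg at hcon
  set d : ℝ := ‖xp - x‖ with hd
  have hfx0 : 0 ≤ f x - fstar := sub_nonneg.2 (hfle x)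
  have hd0 : 0 < d := by
    have h0 : 0 ≤ d := hd ▸ norm_nonneg _
    rcases h0.lt_or_eq with h | h
    · exact h
    · exfalso
      rw [← h] at hcon
      nlinarith
  set g : EuclideanSpace ℝ (Fin n) → ℝ := fun z => Real.sqrt (f z - fstar) with hg
  have hgx : g x < Real.sqrt (μ / 2) * d := by
    have h1 : g x ^ 2 < (Real.sqrt (μ / 2) * d) ^ 2 := by
      have e1 : g x ^ 2 = f x - fstar := Real.sq_sqrt hfx0
      have e2 : (Real.sqrt (μ / 2) * d) ^ 2 = (μ / 2) * d ^ 2 := by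
        rw [mul_pow, Real.sq_sqrt (by positivity : (0:ℝ) ≤ μ / 2)]
      rw [e1, e2]; exact hcon
    nlinarith [Real.sqrt_nonneg (f x - fstar), mul_nonneg (Real.sqrt_nonneg (μ/2)) hd0.le]
  have hgx0 : 0 ≤ g x := Real.sqrt_nonneg _
  set c : ℝ := (g x / d + Real.sqrt (μ / 2)) / 2 with hc
  have hgxd : g x / d < Real.sqrt (μ / 2) := (div_lt_iff₀ hd0).2 (by linarith)
  have hcd : g x < c * d := by
    have h1 : g x / d < c := by rw [hc]; linarith
    exact (div_lt_iff₀ hd0).1 h1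
  have hc0 : 0 < c := by
    have h1 : 0 < Real.sqrt (μ / 2) := Real.sqrt_pos.2 (by positivity)
    have h2 : 0 ≤ g x / d := by positivity
    rw [hc]; linarith
  have hclt : c < Real.sqrt (μ / 2) := by rw [hc]; linarith
  -- minimize g z + c‖z - x‖ on the closed ball of radius d
  have hcont : Continuous (fun z => g z + c * ‖z - x‖) := by
    apply Continuous.add
    · exact Real.continuous_sqrt.comp ((hdiff.continuous).sub continuous_const)
    · exact continuous_const.mul ((continuous_id.sub continuous_const).norm)
  obtain ⟨y, hyK, hmin⟩ := (isCompact_closedBall x d).exists_isMinOn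
    ⟨x, mem_closedBall_self hd0.le⟩ hcont.continuousOn
  have hhyx : g y + c * ‖y - x‖ ≤ g x := by
    have h1 := isMinOn_iff.1 hmin _ (mem_closedBall_self hd0.le)
    simpa using h1
  have hyx_lt : ‖y - x‖ < d := by
    have hgy : 0 ≤ g y := Real.sqrt_nonneg _
    by_contra hge
    push_neg at hge
    nlinarith
  have hynot : y ∉ Xstar := by
    intro hy
    have h1 : Metric.infDist x Xstar ≤ dist x y := Metric.infDist_le_dist_of_mem hy
    rw [← hproj] at h1
    rw [dist_eq_norm, ← norm_neg, neg_sub] at h1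
    linarith
  have hfy : 0 < f y - fstar := by
    have h1 : f y ≠ fstar := fun h => hynot (by rw [hXstar]; exact h)
    rcases lt_or_eq_of_le (hfle y) with h | h
    · linarith
    · exact absurd h.symm h1
  set a : ℝ := f y - fstar with ha
  set N : ℝ := ‖gradient f y‖ with hN
  have hPLy : μ * a ≤ (1 / 2) * N ^ 2 := hPL y
  have hN0 : 0 < N := by nlinarith [norm_nonneg (gradient f y)]
  have hsa : 0 < Real.sqrt a := Real.sqrt_pos.2 hfy
  set s : ℝ := 1 / (2 * Real.sqrt a) with hs
  have hs0 : 0 < s := by rw [hs]; positivity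
  set v : EuclideanSpace ℝ (Fin n) := -(s • gradient f y) with hv
  have hvnorm : ‖v‖ = s * N := by
    rw [hv, norm_neg, norm_smul, Real.norm_eq_abs, abs_of_pos hs0, hN]
  have hvn0 : 0 < ‖v‖ := by rw [hvnorm]; positivity
  -- derivative of ψ t = g (y + t • v) at 0
  have hline : HasDerivAt (fun t : ℝ => y + t • v) v 0 := by
    simpa using ((hasDerivAt_id (0:ℝ)).smul_const v).const_add y
  have hFf : HasFDerivAt f (InnerProductSpace.toDual ℝ _ (gradient f y)) y :=
    (hdiff y).hasGradientAt.hasFDerivAt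
  have hFsub : HasFDerivAt (fun z => f z - fstar)
      (InnerProductSpace.toDual ℝ _ (gradient f y)) y := hFf.sub_const fstar
  have hsqrt : HasDerivAt Real.sqrt s a := by
    rw [hs]; exact Real.hasDerivAt_sqrt (ne_of_gt hfy)
  have hFg : HasFDerivAt g (s • (InnerProductSpace.toDual ℝ _ (gradient f y))) y :=
    hsqrt.comp_hasFDerivAt y hFsub
  have hψ : HasDerivAt (fun t : ℝ => g (y + t • v))
      ((s • (InnerProductSpace.toDual ℝ _ (gradient f y))) v) 0 :=
    hFg.comp_hasDerivAt_of_eq 0 hline (by simp)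
  have hDval : (s • (InnerProductSpace.toDual ℝ _ (gradient f y))) v = -(s ^ 2 * N ^ 2) := by
    rw [ContinuousLinearMap.smul_apply, InnerProductSpace.toDual_apply_apply, hv, inner_neg_right,
      real_inner_smul_right, real_inner_self_eq_norm_sq, ← hN, smul_eq_mul]
    ring
  rw [hDval] at hψ
  -- lower bound on the derivative from minimality
  have hderiv_ge : -(c * ‖v‖) ≤ -(s ^ 2 * N ^ 2) := by
    refine deriv_ge_of_eventually _ _ _ ((d - ‖y - x‖) / ‖v‖)
      (div_pos (by linarith) hvn0) hψ ?_
    intro t ht0 htε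
    have htv : t * ‖v‖ < d - ‖y - x‖ := (lt_div_iff₀ hvn0).1 htε
    have h3 : ‖y + t • v - x‖ ≤ ‖y - x‖ + t * ‖v‖ := by
      have e : y + t • v - x = (y - x) + t • v := by abel
      rw [e]
      calc ‖(y - x) + t • v‖ ≤ ‖y - x‖ + ‖t • v‖ := norm_add_le _ _
        _ = ‖y - x‖ + t * ‖v‖ := by rw [norm_smul, Real.norm_eq_abs, abs_of_pos ht0]
    have hmem : y + t • v ∈ Metric.closedBall x d := by
      rw [Metric.mem_closedBall, dist_eq_norm]
      linarith
    have h2 : g y + c * ‖y - x‖ ≤ g (y + t • v) + c * ‖y + t • v - x‖ :=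
      isMinOn_iff.1 hmin _ hmem
    have h4 : c * ‖y + t • v - x‖ ≤ c * ‖y - x‖ + c * ‖v‖ * t := by
      calc c * ‖y + t • v - x‖ ≤ c * (‖y - x‖ + t * ‖v‖) :=
            mul_le_mul_of_nonneg_left h3 hc0.le
        _ = c * ‖y - x‖ + c * ‖v‖ * t := by ring
    have h5 : g (y + (0:ℝ) • v) = g y := by norm_num
    show g (y + (0:ℝ) • v) - c * ‖v‖ * t ≤ g (y + t • v)
    rw [h5]
    linarith
  -- conclude: s * N ≤ c but s * N ≥ √(μ/2) > c
  clear hmin hcont hψ hFg hFf hFsub hline hsqrt hDval hdiff hLip hPL hfstar hfle hXne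
  clear hcon hgx hhyx hyx_lt hynot hproj hxp hcd hgxd hyK
  rw [hvnorm] at hderiv_ge
  have hs4 : s ^ 2 * (4 * a) = 1 := by rw [hs]; exact aux_s4 a hfy
  clear_value v g N a s c d
  clear hvnorm hvn0 hv hg hN ha hs hc hd v y
  have hsN_le : s * N ≤ c := by
    have h1 : s ^ 2 * N ^ 2 ≤ c * (s * N) := by nlinarith
    have hsN0 : 0 < s * N := by positivity
    nlinarith
  have hsN_ge : Real.sqrt (μ / 2) ≤ s * N := by
    have h1 : μ / 2 ≤ (s * N) ^ 2 := by
      rw [mul_pow]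
      nlinarith [mul_le_mul_of_nonneg_left hPLy (sq_nonneg s), hs4]
    calc Real.sqrt (μ / 2) ≤ Real.sqrt ((s * N) ^ 2) := Real.sqrt_le_sqrt h1
      _ = s * N := Real.sqrt_sq (by positivity)
  linarith
end

section
/- Let F : ℝ^n × ℝ^m → ℝ satisfy Assumption 1 (L-smoothness) and Assumption 3 (two-sided PL condition with constants μ₁, μ₂ > 0), with argmax_y F(x,y) nonempty with finite optimal value for every x and min_x h(x) attained. Then the function h(x) = max_y F(x,y) satisfies the PL condition with constant μ₁: (1/2)‖∇h(x)‖² ≥ μ₁(h(x) − h*) for all x, where h* = min_x h(x). -/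
open InnerProductSpace RealInnerProductSpace Filter Topology Asymptotics

private lemma taylor_bound {E : Type*} [NormedAddCommGroup E] [InnerProductSpace ℝ E]
    [CompleteSpace E] (f : E → ℝ) (hf : Differentiable ℝ f) {L : ℝ} (hL : 0 ≤ L) (a b : E)
    (hlip : ∀ z, ‖gradient f z - gradient f a‖ ≤ L * ‖z - a‖) :
    |f b - f a - ⟪gradient f a, b - a⟫_ℝ| ≤ L * ‖b - a‖ ^ 2 := by
  set g := gradient f a with hg
  have hder : ∀ z, HasFDerivAt (fun w => f w - ⟪g, w⟫_ℝ)
      ((toDual ℝ E) (gradient f z) - (toDual ℝ E) g) z := by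
    intro z
    have h1 := (hf z).hasGradientAt.hasFDerivAt
    have h2 := ((toDual ℝ E) g).hasFDerivAt (x := z)
    exact h1.sub h2
  have bound : ∀ z ∈ segment ℝ a b,
      ‖(toDual ℝ E) (gradient f z) - (toDual ℝ E) g‖ ≤ L * ‖b - a‖ := by
    intro z hz
    rw [← map_sub, LinearIsometryEquiv.norm_map]
    refine (hlip z).trans (mul_le_mul_of_nonneg_left ?_ hL)
    have := dist_add_dist_of_mem_segment hz
    have h1 : dist a z ≤ dist a b := by
      have := dist_nonneg (x := z) (y := b); linarith
    simpa [dist_eq_norm, norm_sub_rev] using h1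
  have key := (convex_segment a b).norm_image_sub_le_of_norm_hasFDerivWithin_le
      (fun z _ => (hder z).hasFDerivWithinAt) bound
      (left_mem_segment ℝ a b) (right_mem_segment ℝ a b)
  have hexp : (f b - ⟪g, b⟫_ℝ) - (f a - ⟪g, a⟫_ℝ) = f b - f a - ⟪g, b - a⟫_ℝ := by
    rw [inner_sub_right]; ring
  rw [hexp] at key
  calc |f b - f a - ⟪g, b - a⟫_ℝ| ≤ L * ‖b - a‖ * ‖b - a‖ := key
    _ = L * ‖b - a‖ ^ 2 := by ring

private lemma ascent_reach {E : Type*} [NormedAddCommGroup E] [InnerProductSpace ℝ E]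
    [CompleteSpace E] (φ : E → ℝ) (hφ : Differentiable ℝ φ) (M L μ : ℝ)
    (hL : 0 < L) (hμ : 0 < μ) (hub : ∀ y, φ y ≤ M)
    (hlip : ∀ y₁ y₂, ‖gradient φ y₁ - gradient φ y₂‖ ≤ L * ‖y₁ - y₂‖)
    (hPL : ∀ y, μ * (M - φ y) ≤ (1 / 2) * ‖gradient φ y‖ ^ 2) (y₀ : E) :
    ∃ yb, φ yb = M ∧ ‖yb - y₀‖ ≤
      (1 / (Real.sqrt L * (1 - Real.sqrt (max (1 - μ / (2 * L)) 0)))) *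
        Real.sqrt (M - φ y₀) := by
  set ρ : ℝ := max (1 - μ / (2 * L)) 0 with hρdef
  have hρ0 : 0 ≤ ρ := le_max_right _ _
  have hρ1 : ρ < 1 := by
    rw [hρdef, max_lt_iff]
    refine ⟨?_, by norm_num⟩
    have : 0 < μ / (2 * L) := div_pos hμ (by linarith)
    linarith
  set r : ℝ := Real.sqrt ρ with hrdef
  have hr0 : 0 ≤ r := Real.sqrt_nonneg _
  have hr1 : r < 1 := by
    rw [hrdef]
    nlinarith [Real.sq_sqrt hρ0, Real.sqrt_nonneg ρ]
  set T : E → E := fun z => z + (1 / (2 * L)) • gradient φ z with hT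
  have step1 : ∀ z, φ z + ‖gradient φ z‖ ^ 2 / (4 * L) ≤ φ (T z) := by
    intro z
    have htay := taylor_bound φ hφ hL.le z (T z)
      (fun w => by simpa using hlip w z)
    have hTz : T z - z = (1 / (2 * L)) • gradient φ z := by simp [hT]
    have hin : ⟪gradient φ z, T z - z⟫_ℝ = 1 / (2 * L) * ‖gradient φ z‖ ^ 2 := by
      rw [hTz, real_inner_smul_right, real_inner_self_eq_norm_sq]
    have hnrm : ‖T z - z‖ ^ 2 = (1 / (2 * L)) ^ 2 * ‖gradient φ z‖ ^ 2 := by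
      rw [hTz, norm_smul, mul_pow]
      congr 1
      rw [Real.norm_eq_abs, abs_of_pos (by positivity)]
    rw [abs_le] at htay
    have h1 := htay.1
    rw [hin, hnrm] at h1
    have e1 : L * ((1 / (2 * L)) ^ 2 * ‖gradient φ z‖ ^ 2)
        = ‖gradient φ z‖ ^ 2 / (4 * L) := by field_simp; ring
    have e2 : 1 / (2 * L) * ‖gradient φ z‖ ^ 2 = ‖gradient φ z‖ ^ 2 / (2 * L) := by ring
    have e3 : ‖gradient φ z‖ ^ 2 / (2 * L) - ‖gradient φ z‖ ^ 2 / (4 * L)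
        = ‖gradient φ z‖ ^ 2 / (4 * L) := by field_simp; ring
    rw [e1, e2] at h1
    linarith
  have step2 : ∀ z, M - φ (T z) ≤ ρ * (M - φ z) := by
    intro z
    have h1 := step1 z
    have h2 := hPL z
    have h3 := hub z
    have hcase : M - φ (T z) ≤ (1 - μ / (2 * L)) * (M - φ z) := by
      have h4 : μ * (M - φ z) / (2 * L) ≤ ‖gradient φ z‖ ^ 2 / (4 * L) := by
        rw [div_le_div_iff₀ (by linarith) (by linarith)]
        nlinarith
      have hexp : (1 - μ / (2 * L)) * (M - φ z)
          = (M - φ z) - μ * (M - φ z) / (2 * L) := by field_simp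
      rw [hexp]; linarith
    calc M - φ (T z) ≤ (1 - μ / (2 * L)) * (M - φ z) := hcase
      _ ≤ ρ * (M - φ z) := mul_le_mul_of_nonneg_right (le_max_left _ _) (by linarith)
  have step3 : ∀ z, ‖T z - z‖ ≤ Real.sqrt ((M - φ z) / L) := by
    intro z
    have h1 := step1 z
    have h3 := hub (T z)
    have hgr : ‖gradient φ z‖ ^ 2 ≤ 4 * L * (M - φ z) := by
      have h5 : ‖gradient φ z‖ ^ 2 / (4 * L) ≤ M - φ z := by linarith
      rw [div_le_iff₀ (by linarith)] at h5
      linarith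
    have hTz : T z - z = (1 / (2 * L)) • gradient φ z := by simp [hT]
    refine Real.le_sqrt_of_sq_le ?_
    rw [hTz, norm_smul, mul_pow, Real.norm_eq_abs,
      abs_of_pos (by positivity : (0:ℝ) < 1 / (2 * L))]
    have e : (1 / (2 * L)) ^ 2 * ‖gradient φ z‖ ^ 2
        = ‖gradient φ z‖ ^ 2 / (4 * L ^ 2) := by
      rw [div_pow, one_pow, show (2 * L) ^ 2 = 4 * L ^ 2 by ring,
        div_mul_eq_mul_div, one_mul]
    rw [e, div_le_div_iff₀ (by positivity) hL]
    nlinarith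
  set y : ℕ → E := fun k => T^[k] y₀ with hy
  have hysucc : ∀ k, y (k + 1) = T (y k) := by
    intro k; rw [hy]; simp [Function.iterate_succ_apply']
  set ε0 : ℝ := M - φ y₀ with hε0
  have hε0nn : 0 ≤ ε0 := by rw [hε0]; linarith [hub y₀]
  have hεk : ∀ k, M - φ (y k) ≤ ε0 * ρ ^ k := by
    intro k; induction k with
    | zero => simp [hy, hε0]
    | succ k ih =>
      rw [hysucc k]
      calc M - φ (T (y k)) ≤ ρ * (M - φ (y k)) := step2 _
        _ ≤ ρ * (ε0 * ρ ^ k) := mul_le_mul_of_nonneg_left ih hρ0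
        _ = ε0 * ρ ^ (k + 1) := by ring
  set Cc : ℝ := Real.sqrt ε0 / Real.sqrt L with hCc
  have hdist : ∀ k, dist (y k) (y (k + 1)) ≤ Cc * r ^ k := by
    intro k
    rw [dist_eq_norm, norm_sub_rev, hysucc]
    refine (step3 (y k)).trans ?_
    have h1 : (M - φ (y k)) / L ≤ ε0 * ρ ^ k / L := by
      gcongr
      exact hεk k
    refine (Real.sqrt_le_sqrt h1).trans_eq ?_
    have e : ε0 * ρ ^ k / L = (Real.sqrt ε0 * r ^ k / Real.sqrt L) ^ 2 := by
      rw [div_pow, mul_pow, Real.sq_sqrt hε0nn, Real.sq_sqrt hL.le, ← pow_mul,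
        mul_comm k 2, pow_mul, Real.sq_sqrt hρ0]
    rw [e, Real.sqrt_sq (by positivity)]
    rw [hCc]; ring
  have hcauchy : CauchySeq y := cauchySeq_of_le_geometric r Cc hr1 hdist
  obtain ⟨a, ha⟩ := cauchySeq_tendsto_of_complete hcauchy
  have hd0 : dist (y 0) a ≤ Cc / (1 - r) :=
    dist_le_of_le_geometric_of_tendsto₀ r Cc hr1 hdist ha
  have h5 : Tendsto (fun k => φ (y k)) atTop (𝓝 (φ a)) :=
    (hφ.continuous.tendsto a).comp ha
  have h6 : Tendsto (fun k => φ (y k)) atTop (𝓝 M) := by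
    have hlow : Tendsto (fun k : ℕ => M - ε0 * ρ ^ k) atTop (𝓝 M) := by
      have := (tendsto_pow_atTop_nhds_zero_of_lt_one hρ0 hρ1).const_mul ε0
      simpa using tendsto_const_nhds.sub this
    refine tendsto_of_tendsto_of_tendsto_of_le_of_le hlow tendsto_const_nhds ?_ ?_
    · intro k; have := hεk k; dsimp; linarith
    · intro k; exact hub _
  have hφa : φ a = M := tendsto_nhds_unique h5 h6
  refine ⟨a, hφa, ?_⟩
  have hy0 : y 0 = y₀ := rfl
  have : ‖a - y₀‖ = dist (y 0) a := by rw [hy0, dist_eq_norm, norm_sub_rev]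
  rw [this]
  refine hd0.trans_eq ?_
  rw [hCc]
  field_simp


set_option maxHeartbeats 1000000 in

/-- Under `L`-smoothness (Assumption 1) and the two-sided PL condition
(Assumption 3), with the max over `y` attained (value `h(x)`) and `min_x h(x)` attained
(value `h*`), the function `h(x) = max_y F(x,y)` satisfies the PL condition with `μ₁`:
`(1/2)‖∇h(x)‖² ≥ μ₁(h(x) − h*)`. -/
theorem h_is_PL (n m : ℕ)
    (F : EuclideanSpace ℝ (Fin n) → EuclideanSpace ℝ (Fin m) → ℝ)
    (L μ₁ μ₂ : ℝ) (hμ₁ : 0 < μ₁) (hμ₂ : 0 < μ₂)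
    (hdiff : Differentiable ℝ fun p : EuclideanSpace ℝ (Fin n) × EuclideanSpace ℝ (Fin m) =>
      F p.1 p.2)
    (hsmoothx : ∀ x₁ x₂ y₁ y₂,
      ‖gradient (fun x => F x y₁) x₁ - gradient (fun x => F x y₂) x₂‖
        ≤ L * (‖x₁ - x₂‖ + ‖y₁ - y₂‖))
    (hsmoothy : ∀ x₁ x₂ y₁ y₂,
      ‖gradient (F x₁) y₁ - gradient (F x₂) y₂‖ ≤ L * (‖x₁ - x₂‖ + ‖y₁ - y₂‖))
    (Fmin : EuclideanSpace ℝ (Fin m) → ℝ)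
    (hFmin : ∀ y, IsGLB (Set.range fun x => F x y) (Fmin y))
    (h : EuclideanSpace ℝ (Fin n) → ℝ)
    (hmax : ∀ x, IsGreatest (Set.range (F x)) (h x))
    (hstar : ℝ) (hhstar : IsLeast (Set.range h) hstar)
    (hPLx : ∀ x y, μ₁ * (F x y - Fmin y) ≤ (1 / 2) * ‖gradient (fun x' => F x' y) x‖ ^ 2)
    (hPLy : ∀ x y, μ₂ * (h x - F x y) ≤ (1 / 2) * ‖gradient (F x) y‖ ^ 2)
    (x : EuclideanSpace ℝ (Fin n)) :
    μ₁ * (h x - hstar) ≤ (1 / 2) * ‖gradient h x‖ ^ 2 := by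
  classical
  -- replace `L` by a positive constant
  set L' : ℝ := max L 0 + 1 with hL'def
  have hL' : (0:ℝ) < L' := by
    have : (0:ℝ) ≤ max L 0 := le_max_right _ _
    rw [hL'def]; linarith
  have hLL' : L ≤ L' := by
    have := le_max_left L 0
    rw [hL'def]; linarith
  have hsx : ∀ x₁ x₂ y₁ y₂,
      ‖gradient (fun x => F x y₁) x₁ - gradient (fun x => F x y₂) x₂‖
        ≤ L' * (‖x₁ - x₂‖ + ‖y₁ - y₂‖) := fun a b c d =>
    (hsmoothx a b c d).trans (mul_le_mul_of_nonneg_right hLL' (by positivity))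
  have hsy : ∀ x₁ x₂ y₁ y₂,
      ‖gradient (F x₁) y₁ - gradient (F x₂) y₂‖ ≤ L' * (‖x₁ - x₂‖ + ‖y₁ - y₂‖) :=
    fun a b c d =>
    (hsmoothy a b c d).trans (mul_le_mul_of_nonneg_right hLL' (by positivity))
  have hdx : ∀ y, Differentiable ℝ (fun x' => F x' y) := fun y =>
    hdiff.comp (differentiable_id.prodMk (differentiable_const y))
  have hdy : ∀ x', Differentiable ℝ (F x') := fun x' =>
    hdiff.comp ((differentiable_const x').prodMk differentiable_id)
  obtain ⟨yb, hyb⟩ := (hmax x).1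
  have hubx : ∀ y', F x y' ≤ h x := fun y' => (hmax x).2 ⟨y', rfl⟩
  set g := gradient (fun x' => F x' yb) x with hgdef
  -- the `y`-gradient vanishes at the maximizer
  have hgy0 : gradient (F x) yb = 0 := by
    have hloc : IsLocalMax (F x) yb :=
      Filter.Eventually.of_forall fun y' => le_of_le_of_eq (hubx y') hyb.symm
    rw [gradient, hloc.fderiv_eq_zero, map_zero]
  -- the gap at nearby points is quadratically small
  have hδ : ∀ x', h x' - F x' yb ≤ L' ^ 2 / (2 * μ₂) * ‖x' - x‖ ^ 2 := by
    intro x'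
    have h1 := hPLy x' yb
    have h2 : ‖gradient (F x') yb‖ ≤ L' * ‖x' - x‖ := by
      have := hsy x' x yb yb
      simpa [hgy0] using this
    have e : L' ^ 2 / (2 * μ₂) * ‖x' - x‖ ^ 2 = (L' * ‖x' - x‖) ^ 2 / (2 * μ₂) := by
      ring
    rw [e, le_div_iff₀ (by linarith : (0:ℝ) < 2 * μ₂)]
    nlinarith [norm_nonneg (gradient (F x') yb)]
  -- constants
  set ρ : ℝ := max (1 - μ₂ / (2 * L')) 0 with hρdef
  have hρ0 : (0:ℝ) ≤ ρ := le_max_right _ _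
  have hρ1 : ρ < 1 := by
    rw [hρdef, max_lt_iff]
    refine ⟨?_, by norm_num⟩
    have : 0 < μ₂ / (2 * L') := div_pos hμ₂ (by linarith)
    linarith
  have hsρ : Real.sqrt ρ < 1 := by
    nlinarith [Real.sq_sqrt hρ0, Real.sqrt_nonneg ρ]
  set Cst : ℝ := 1 / (Real.sqrt L' * (1 - Real.sqrt ρ)) with hCstdef
  have hCst0 : 0 ≤ Cst := by
    have h1 : 0 < Real.sqrt L' * (1 - Real.sqrt ρ) :=
      mul_pos (Real.sqrt_pos.mpr hL') (by linarith)
    positivity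
  set C₀ : ℝ := Cst * Real.sqrt (L' ^ 2 / (2 * μ₂)) with hC₀def
  have hC₀0 : 0 ≤ C₀ := mul_nonneg hCst0 (Real.sqrt_nonneg _)
  -- main quadratic estimate
  have hkey : ∀ x', |h x' - h x - ⟪g, x' - x⟫_ℝ| ≤ (L' * C₀ + L') * ‖x' - x‖ ^ 2 := by
    intro x'
    have htay := taylor_bound (fun x'' => F x'' yb) (hdx yb) hL'.le x x'
      (fun z => by simpa using hsx z x yb yb)
    rw [abs_le] at htay
    have hlow : h x + ⟪g, x' - x⟫_ℝ - L' * ‖x' - x‖ ^ 2 ≤ h x' := by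
      have h1 := htay.1
      have h2 : F x' yb ≤ h x' := (hmax x').2 ⟨yb, rfl⟩
      rw [hyb, ← hgdef] at h1
      linarith
    obtain ⟨yh, hyh, hyhd⟩ := ascent_reach (F x') (hdy x') (h x') L' μ₂ hL' hμ₂
      (fun y' => (hmax x').2 ⟨y', rfl⟩) (fun a b => by simpa using hsy x' x' a b)
      (hPLy x') yb
    have hdistyy : ‖yh - yb‖ ≤ C₀ * ‖x' - x‖ := by
      refine hyhd.trans ?_
      have h1 : Real.sqrt (h x' - F x' yb)
          ≤ Real.sqrt (L' ^ 2 / (2 * μ₂) * ‖x' - x‖ ^ 2) := Real.sqrt_le_sqrt (hδ x')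
      have h2 : Real.sqrt (L' ^ 2 / (2 * μ₂) * ‖x' - x‖ ^ 2)
          = Real.sqrt (L' ^ 2 / (2 * μ₂)) * ‖x' - x‖ := by
        rw [Real.sqrt_mul (by positivity), Real.sqrt_sq (norm_nonneg _)]
      calc Cst * Real.sqrt (h x' - F x' yb)
          ≤ Cst * (Real.sqrt (L' ^ 2 / (2 * μ₂)) * ‖x' - x‖) := by
            refine mul_le_mul_of_nonneg_left ?_ hCst0
            rw [← h2]; exact h1
        _ = C₀ * ‖x' - x‖ := by rw [hC₀def]; ring
    have htay2 := taylor_bound (fun x'' => F x'' yh) (hdx yh) hL'.le x x'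
      (fun z => by simpa using hsx z x yh yh)
    rw [abs_le] at htay2
    have h3 := htay2.2
    have h4 : F x yh ≤ h x := hubx yh
    set gy := gradient (fun x'' => F x'' yh) x with hgydef
    have h5 : ⟪gy, x' - x⟫_ℝ ≤ ⟪g, x' - x⟫_ℝ + L' * C₀ * ‖x' - x‖ ^ 2 := by
      have hi : ⟪gy - g, x' - x⟫_ℝ ≤ ‖gy - g‖ * ‖x' - x‖ := real_inner_le_norm _ _
      have hn : ‖gy - g‖ ≤ L' * ‖yh - yb‖ := by simpa using hsx x x yh yb
      have hexp : ⟪gy - g, x' - x⟫_ℝ = ⟪gy, x' - x⟫_ℝ - ⟪g, x' - x⟫_ℝ :=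
        inner_sub_left _ _ _
      rw [hexp] at hi
      have t1 : ‖gy - g‖ * ‖x' - x‖ ≤ L' * ‖yh - yb‖ * ‖x' - x‖ :=
        mul_le_mul_of_nonneg_right hn (norm_nonneg _)
      have t2 : L' * ‖yh - yb‖ * ‖x' - x‖ ≤ L' * (C₀ * ‖x' - x‖) * ‖x' - x‖ :=
        mul_le_mul_of_nonneg_right
          (mul_le_mul_of_nonneg_left hdistyy hL'.le) (norm_nonneg _)
      have e : L' * (C₀ * ‖x' - x‖) * ‖x' - x‖ = L' * C₀ * ‖x' - x‖ ^ 2 := by ring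
      linarith
    have hup : h x' ≤ h x + ⟪g, x' - x⟫_ℝ + (L' * C₀ + L') * ‖x' - x‖ ^ 2 := by
      have e2 : (L' * C₀ + L') * ‖x' - x‖ ^ 2
          = L' * C₀ * ‖x' - x‖ ^ 2 + L' * ‖x' - x‖ ^ 2 := by ring
      rw [← hyh]
      linarith
    have hnn : 0 ≤ L' * C₀ * ‖x' - x‖ ^ 2 := by
      have := sq_nonneg ‖x' - x‖
      nlinarith
    have e2 : (L' * C₀ + L') * ‖x' - x‖ ^ 2
        = L' * C₀ * ‖x' - x‖ ^ 2 + L' * ‖x' - x‖ ^ 2 := by ring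
    rw [abs_le]
    constructor
    · rw [e2]; linarith
    · linarith
  -- differentiability of h at x with gradient g
  have hGrad : HasGradientAt h g x := by
    rw [hasGradientAt_iff_isLittleO]
    have hO : (fun x' => h x' - h x - ⟪g, x' - x⟫_ℝ)
        =O[𝓝 x] fun x' => ‖x' - x‖ * ‖x' - x‖ := by
      refine Asymptotics.IsBigO.of_bound (L' * C₀ + L')
        (Filter.Eventually.of_forall fun x' => ?_)
      have e : ‖‖x' - x‖ * ‖x' - x‖‖ = ‖x' - x‖ ^ 2 := by
        rw [Real.norm_eq_abs, abs_mul, abs_norm, sq]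
      rw [Real.norm_eq_abs, e]
      exact hkey x'
    have ho : (fun x' => ‖x' - x‖ * ‖x' - x‖) =o[𝓝 x] fun x' => x' - x := by
      have h1 : (fun x' => ‖x' - x‖) =o[𝓝 x] (fun _ => (1:ℝ)) := by
        rw [Asymptotics.isLittleO_one_iff]
        have h2 : Filter.Tendsto (fun x' => x' - x) (𝓝 x) (𝓝 0) := by
          have := ((continuous_id.sub (continuous_const (y := x))).tendsto x)
          simpa [Pi.sub_def] using this
        simpa using h2.norm
      have h2 : (fun x' => ‖x' - x‖) =O[𝓝 x] fun x' => ‖x' - x‖ :=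
        Asymptotics.isBigO_refl _ _
      have h3 := h1.mul_isBigO h2
      simp only [one_mul] at h3
      exact Asymptotics.isLittleO_norm_right.mp h3
    exact hO.trans_isLittleO ho
  have hgradval : gradient h x = g := hGrad.gradient
  -- conclusion
  obtain ⟨x₀, hx₀⟩ := hhstar.1
  have hFminle : Fmin yb ≤ hstar := by
    have h1 : Fmin yb ≤ F x₀ yb := (hFmin yb).1 ⟨x₀, rfl⟩
    have h2 : F x₀ yb ≤ h x₀ := (hmax x₀).2 ⟨yb, rfl⟩
    exact h1.trans (h2.trans_eq hx₀)
  have hfin := hPLx x yb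
  rw [hyb, ← hgdef] at hfin
  rw [hgradval]
  nlinarith
end

section
/- Let F : ℝ^n × ℝ^m → ℝ be differentiable and L-smooth (Assumption 1), and suppose for every x the function y ↦ −F(x,y) satisfies the PL condition with constant μ₂ > 0 and argmax_y F(x,y) is nonempty with finite optimal value. Let h(x) = max_y F(x,y). Then for all x, y, ‖∇ₓF(x,y) − ∇h(x)‖² ≤ (2L²/μ₂)·(h(x) − F(x,y)). -/
open InnerProductSpace Set

lemma descent_aux {E : Type*} [NormedAddCommGroup E] [InnerProductSpace ℝ E] [CompleteSpace E]
    (f : E → ℝ) (hf : Differentiable ℝ f) {K : ℝ} (hK : 0 ≤ K)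
    (hLip : ∀ a b : E, ‖gradient f a - gradient f b‖ ≤ K * ‖a - b‖) (a b : E) :
    |f b - f a - (inner ℝ (gradient f a) (b - a) : ℝ)| ≤ K * ‖b - a‖ ^ 2 := by
  set v := b - a with hv
  set g : ℝ → ℝ := fun s => f (a + s • v) - s * (inner ℝ (gradient f a) v : ℝ) with hg
  have hder : ∀ s : ℝ, HasDerivAt g
      ((inner ℝ (gradient f (a + s • v)) v : ℝ) - (inner ℝ (gradient f a) v : ℝ)) s := by
    intro s
    have hc : HasDerivAt (fun s : ℝ => a + s • v) v s := by
      simpa using ((hasDerivAt_id s).smul_const v).const_add a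
    have hfc : HasFDerivAt f (toDual ℝ E (gradient f (a + s • v))) (a + s • v) :=
      (hf _).hasGradientAt.hasFDerivAt
    have h1 := hfc.comp_hasDerivAt s hc
    have h2 : HasDerivAt (fun s : ℝ => s * (inner ℝ (gradient f a) v : ℝ))
        ((inner ℝ (gradient f a) v : ℝ)) s := hasDerivAt_mul_const _
    exact h1.sub h2
  have bound : ∀ s ∈ Ico (0:ℝ) 1,
      ‖(inner ℝ (gradient f (a + s • v)) v : ℝ) - (inner ℝ (gradient f a) v : ℝ)‖ ≤ K * ‖v‖ ^ 2 := by
    intro s hs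
    have h1 : (inner ℝ (gradient f (a + s • v)) v : ℝ) - (inner ℝ (gradient f a) v : ℝ)
        = inner ℝ (gradient f (a + s • v) - gradient f a) v := by
      rw [inner_sub_left]
    rw [h1]
    calc ‖(inner ℝ (gradient f (a + s • v) - gradient f a) v : ℝ)‖
        ≤ ‖gradient f (a + s • v) - gradient f a‖ * ‖v‖ := norm_inner_le_norm _ _
      _ ≤ (K * ‖a + s • v - a‖) * ‖v‖ := by
          gcongr; exact hLip _ _
      _ ≤ K * ‖v‖ ^ 2 := by
          have : ‖a + s • v - a‖ = s * ‖v‖ := by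
            simp [norm_smul, abs_of_nonneg hs.1]
          rw [this]
          have hs1 : s ≤ 1 := le_of_lt hs.2
          nlinarith [mul_nonneg (mul_nonneg hK (sub_nonneg.2 hs1)) (sq_nonneg ‖v‖)]
  have := norm_image_sub_le_of_norm_deriv_le_segment'
    (f' := fun s => (inner ℝ (gradient f (a + s • v)) v : ℝ) - (inner ℝ (gradient f a) v : ℝ))
    (fun s hs => (hder s).hasDerivWithinAt) bound 1 (by norm_num)
  have hg1 : g 1 = f b - (inner ℝ (gradient f a) v : ℝ) := by simp [hg, hv]
  have hg0 : g 0 = f a := by simp [hg]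
  rw [hg1, hg0] at this
  simpa [Real.norm_eq_abs, sub_right_comm] using this

set_option maxHeartbeats 4000000 in
/-- Under `L`-smoothness of `F` and the `μ₂`-PL condition for `y ↦ −F(x,y)`
(with the max over `y` attained, with value `h(x)`), the deviation of the partial gradient
from `∇h` is controlled: `‖∇ₓF(x,y) − ∇h(x)‖² ≤ (2L²/μ₂)(h(x) − F(x,y))`. -/
theorem gradient_deviation_bound (n m : ℕ)
    (F : EuclideanSpace ℝ (Fin n) → EuclideanSpace ℝ (Fin m) → ℝ)
    (L μ₂ : ℝ) (hμ₂ : 0 < μ₂)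
    (hdiff : Differentiable ℝ fun p : EuclideanSpace ℝ (Fin n) × EuclideanSpace ℝ (Fin m) =>
      F p.1 p.2)
    (hsmoothx : ∀ x₁ x₂ y₁ y₂,
      ‖gradient (fun x => F x y₁) x₁ - gradient (fun x => F x y₂) x₂‖
        ≤ L * (‖x₁ - x₂‖ + ‖y₁ - y₂‖))
    (hsmoothy : ∀ x₁ x₂ y₁ y₂,
      ‖gradient (F x₁) y₁ - gradient (F x₂) y₂‖ ≤ L * (‖x₁ - x₂‖ + ‖y₁ - y₂‖))
    (h : EuclideanSpace ℝ (Fin n) → ℝ)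
    (hmax : ∀ x, IsGreatest (Set.range (F x)) (h x))
    (hPLy : ∀ x y, μ₂ * (h x - F x y) ≤ (1 / 2) * ‖gradient (F x) y‖ ^ 2)
    (x : EuclideanSpace ℝ (Fin n)) (y : EuclideanSpace ℝ (Fin m)) :
    ‖gradient (fun x' => F x' y) x - gradient h x‖ ^ 2
      ≤ (2 * L ^ 2 / μ₂) * (h x - F x y) := by
  -- basic differentiability of partial maps
  have hdx : ∀ z, Differentiable ℝ (fun x' => F x' z) := fun z =>
    hdiff.comp (differentiable_id.prodMk (differentiable_const z))
  have hdy : ∀ a, Differentiable ℝ (F a) := fun a =>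
    hdiff.comp ((differentiable_const a).prodMk differentiable_id)
  have ub : ∀ a z, F a z ≤ h a := fun a z => (hmax a).2 ⟨z, rfl⟩
  -- Lipschitz bounds with |L|
  have crossx : ∀ (a b : EuclideanSpace ℝ (Fin n)) (z₁ z₂ : EuclideanSpace ℝ (Fin m)),
      ‖gradient (fun x' => F x' z₁) a - gradient (fun x' => F x' z₂) b‖
        ≤ |L| * (‖a - b‖ + ‖z₁ - z₂‖) := by
    intro a b z₁ z₂
    refine (hsmoothx a b z₁ z₂).trans ?_
    have : (0:ℝ) ≤ ‖a - b‖ + ‖z₁ - z₂‖ := by positivity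
    exact mul_le_mul_of_nonneg_right (le_abs_self L) this
  have crossy : ∀ (a b : EuclideanSpace ℝ (Fin n)) (z₁ z₂ : EuclideanSpace ℝ (Fin m)),
      ‖gradient (F a) z₁ - gradient (F b) z₂‖ ≤ |L| * (‖a - b‖ + ‖z₁ - z₂‖) := by
    intro a b z₁ z₂
    refine (hsmoothy a b z₁ z₂).trans ?_
    have : (0:ℝ) ≤ ‖a - b‖ + ‖z₁ - z₂‖ := by positivity
    exact mul_le_mul_of_nonneg_right (le_abs_self L) this
  -- descent lemma specializations
  have dxA : ∀ (z : EuclideanSpace ℝ (Fin m)) (a b : EuclideanSpace ℝ (Fin n)),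
      |F b z - F a z - (inner ℝ (gradient (fun x' => F x' z) a) (b - a) : ℝ)|
        ≤ |L| * ‖b - a‖ ^ 2 := by
    intro z a b
    refine descent_aux _ (hdx z) (abs_nonneg L) (fun a b => ?_) a b
    simpa using crossx a b z z
  have dyA : ∀ (a : EuclideanSpace ℝ (Fin n)) (z w : EuclideanSpace ℝ (Fin m)),
      |F a w - F a z - (inner ℝ (gradient (F a) z) (w - z) : ℝ)| ≤ |L| * ‖w - z‖ ^ 2 := by
    intro a z w
    refine descent_aux _ (hdy a) (abs_nonneg L) (fun z w => ?_) z w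
    simpa using crossy a a z w
  -- gradient vanishes at a maximizer
  have gmax0 : ∀ (a : EuclideanSpace ℝ (Fin n)) (z : EuclideanSpace ℝ (Fin m)),
      F a z = h a → gradient (F a) z = 0 := by
    intro a z hz
    have hmax' : IsLocalMax (F a) z := by
      refine Filter.Eventually.of_forall fun w => ?_
      rw [hz]; exact ub a w
    have : fderiv ℝ (F a) z = 0 := hmax'.fderiv_eq_zero
    show (toDual ℝ _).symm (fderiv ℝ (F a) z) = 0
    rw [this]; simp
  obtain ⟨m0, hm0⟩ := (hmax x).1
  set g := gradient (fun x' => F x' m0) x with hgdef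
  -- ================= KEY ESTIMATE =================
  have le_add_all : ∀ a b : ℝ, (∀ ε : ℝ, 0 < ε → a ≤ b + ε) → a ≤ b := by
    intro a b H
    by_contra hab; push_neg at hab
    have := H ((a - b) / 2) (by linarith); linarith
  have key : ∀ K : ℝ, 0 < K → |L| ≤ K → ∀ z : EuclideanSpace ℝ (Fin m),
      ‖gradient (fun x' => F x' z) x - g‖ ≤ K * Real.sqrt (2 * (h x - F x z) / μ₂) := by
    intro K hK0 hKL z
    have hφz : 0 ≤ h x - F x z := sub_nonneg.2 (ub x z)
    have dxK : ∀ (w : EuclideanSpace ℝ (Fin m)) (a b : EuclideanSpace ℝ (Fin n)),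
        |F b w - F a w - (inner ℝ (gradient (fun x' => F x' w) a) (b - a) : ℝ)|
          ≤ K * ‖b - a‖ ^ 2 :=
      fun w a b => (dxA w a b).trans (mul_le_mul_of_nonneg_right hKL (sq_nonneg _))
    have dyK : ∀ (w v : EuclideanSpace ℝ (Fin m)),
        |F x v - F x w - (inner ℝ (gradient (F x) w) (v - w) : ℝ)| ≤ K * ‖v - w‖ ^ 2 :=
      fun w v => (dyA x w v).trans (mul_le_mul_of_nonneg_right hKL (sq_nonneg _))
    have crossxK : ∀ w₁ w₂ : EuclideanSpace ℝ (Fin m),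
        ‖gradient (fun x' => F x' w₁) x - gradient (fun x' => F x' w₂) x‖ ≤ K * ‖w₁ - w₂‖ := by
      intro w₁ w₂
      have := crossx x x w₁ w₂
      simp only [sub_self, norm_zero, zero_add] at this
      exact this.trans (mul_le_mul_of_nonneg_right hKL (norm_nonneg _))
    have crossyK : ∀ (a b : EuclideanSpace ℝ (Fin n)) (w : EuclideanSpace ℝ (Fin m)),
        ‖gradient (F a) w - gradient (F b) w‖ ≤ K * ‖a - b‖ := by
      intro a b w
      have := crossy a b w w
      simp only [sub_self, norm_zero, add_zero] at this
      exact this.trans (mul_le_mul_of_nonneg_right hKL (norm_nonneg _))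
    -- gradient norm bound from nonnegativity of the gap
    have gb : ∀ w : EuclideanSpace ℝ (Fin m),
        ‖gradient (F x) w‖ ^ 2 ≤ 4 * K * (h x - F x w) := by
      intro w
      have h1 := (abs_le.1 (dyK w (w + (1 / (2 * K)) • gradient (F x) w))).1
      have h2 : (inner ℝ (gradient (F x) w) ((w + (1 / (2 * K)) • gradient (F x) w) - w) : ℝ)
          = (1 / (2 * K)) * ‖gradient (F x) w‖ ^ 2 := by
        rw [show (w + (1 / (2 * K)) • gradient (F x) w) - w = (1 / (2 * K)) • gradient (F x) w
          from by abel]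
        rw [real_inner_smul_right, real_inner_self_eq_norm_sq]
      have h3 : ‖(w + (1 / (2 * K)) • gradient (F x) w) - w‖ ^ 2
          = (1 / (2 * K)) ^ 2 * ‖gradient (F x) w‖ ^ 2 := by
        rw [show (w + (1 / (2 * K)) • gradient (F x) w) - w = (1 / (2 * K)) • gradient (F x) w
          from by abel]
        rw [norm_smul, mul_pow, Real.norm_eq_abs,
          abs_of_nonneg (by positivity : (0:ℝ) ≤ 1 / (2 * K))]
      rw [h2, h3] at h1
      have h4 : F x (w + (1 / (2 * K)) • gradient (F x) w) ≤ h x := ub x _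
      have h5 : K * ((1 / (2 * K)) ^ 2 * ‖gradient (F x) w‖ ^ 2)
          = (1 / (4 * K)) * ‖gradient (F x) w‖ ^ 2 := by field_simp; ring
      rw [h5] at h1
      have e : (1 / (2 * K)) * ‖gradient (F x) w‖ ^ 2
          = (1 / (4 * K)) * ‖gradient (F x) w‖ ^ 2 + (1 / (4 * K)) * ‖gradient (F x) w‖ ^ 2 := by
        field_simp; ring
      have h6 : (1 / (4 * K)) * ‖gradient (F x) w‖ ^ 2 ≤ h x - F x w := by linarith
      calc ‖gradient (F x) w‖ ^ 2
          = ((1 / (4 * K)) * ‖gradient (F x) w‖ ^ 2) * (4 * K) := by field_simp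
        _ ≤ (h x - F x w) * (4 * K) := mul_le_mul_of_nonneg_right h6 (by positivity)
        _ = 4 * K * (h x - F x w) := by ring
    -- one-step perturbation inequality
    have p2 : ∀ (w : EuclideanSpace ℝ (Fin m)) (t : ℝ), 0 < t →
        μ₂ * (t * ‖gradient (fun x' => F x' w) x - g‖ ^ 2)
          ≤ 1 / 2 * ‖gradient (F x) w‖ ^ 2
            + ‖gradient (F x) w‖ * (K * (t * ‖gradient (fun x' => F x' w) x - g‖))
            + (1 / 2 * K ^ 2 + 2 * μ₂ * K) * (t ^ 2 * ‖gradient (fun x' => F x' w) x - g‖ ^ 2) := by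
      intro w t ht
      set d := g - gradient (fun x' => F x' w) x with hd
      have hDrev : ‖gradient (fun x' => F x' w) x - g‖ = ‖d‖ := by
        rw [hd, norm_sub_rev]
      rw [hDrev]
      set xt := x + t • d with hxt
      have hxtd : xt - x = t • d := by rw [hxt]; abel
      have hxtx : ‖xt - x‖ = t * ‖d‖ := by
        rw [hxtd, norm_smul, Real.norm_eq_abs, abs_of_nonneg ht.le]
      have A1 := (abs_le.1 (dxK m0 x xt)).1
      have A1i : (inner ℝ (gradient (fun x' => F x' m0) x) (xt - x) : ℝ)
          = t * (inner ℝ g d : ℝ) := by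
        rw [hxtd, real_inner_smul_right, hgdef]
      have A1n : ‖xt - x‖ ^ 2 = t ^ 2 * ‖d‖ ^ 2 := by rw [hxtx]; ring
      rw [A1i, A1n] at A1
      have A2 : F xt m0 ≤ h xt := ub xt m0
      have A3 := (abs_le.1 (dxK w x xt)).2
      have A3i : (inner ℝ (gradient (fun x' => F x' w) x) (xt - x) : ℝ)
          = t * (inner ℝ (gradient (fun x' => F x' w) x) d : ℝ) := by
        rw [hxtd, real_inner_smul_right]
      rw [A3i, A1n] at A3
      have A4 := hPLy xt w
      have A5 : ‖gradient (F xt) w‖ ≤ ‖gradient (F x) w‖ + K * (t * ‖d‖) := by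
        have h1 := crossyK xt x w
        rw [hxtx] at h1
        have h4 : ‖gradient (F xt) w‖
            ≤ ‖gradient (F x) w‖ + ‖gradient (F xt) w - gradient (F x) w‖ := by
          simpa using norm_add_le (gradient (F x) w) (gradient (F xt) w - gradient (F x) w)
        linarith
      have A6 : (inner ℝ g d : ℝ) - (inner ℝ (gradient (fun x' => F x' w) x) d : ℝ) = ‖d‖ ^ 2 := by
        rw [← real_inner_self_eq_norm_sq d]
        nth_rewrite 3 [hd]
        rw [inner_sub_left]
      have A7 : ‖gradient (F xt) w‖ ^ 2 ≤ (‖gradient (F x) w‖ + K * (t * ‖d‖)) ^ 2 := by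
        nlinarith [norm_nonneg (gradient (F xt) w), A5, norm_nonneg (gradient (F x) w),
          mul_nonneg (mul_nonneg hK0.le ht.le) (norm_nonneg d)]
      have A8 : 0 ≤ h x - F x w := sub_nonneg.2 (ub x w)
      have gap : h x - F x w + (t * ‖d‖ ^ 2 - 2 * K * (t ^ 2 * ‖d‖ ^ 2)) ≤ h xt - F xt w := by
        have e1 : t * (inner ℝ g d : ℝ) - t * (inner ℝ (gradient (fun x' => F x' w) x) d : ℝ)
            = t * ‖d‖ ^ 2 := by rw [← mul_sub, A6]
        nlinarith [A1, A2, A3, hm0, e1]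
      have chain : μ₂ * (h x - F x w + (t * ‖d‖ ^ 2 - 2 * K * (t ^ 2 * ‖d‖ ^ 2)))
          ≤ 1 / 2 * (‖gradient (F x) w‖ + K * (t * ‖d‖)) ^ 2 := by
        calc μ₂ * (h x - F x w + (t * ‖d‖ ^ 2 - 2 * K * (t ^ 2 * ‖d‖ ^ 2)))
            ≤ μ₂ * (h xt - F xt w) := mul_le_mul_of_nonneg_left gap hμ₂.le
          _ ≤ 1 / 2 * ‖gradient (F xt) w‖ ^ 2 := A4
          _ ≤ 1 / 2 * (‖gradient (F x) w‖ + K * (t * ‖d‖)) ^ 2 := by linarith [A7]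
      nlinarith [chain, mul_nonneg hμ₂.le A8]
    -- ============ iteration layer ============
    have key2 : ∀ η : ℝ, 0 < η → η ≤ 1 / (2 * K) → η ≤ 1 / (2 * μ₂) →
        ‖gradient (fun x' => F x' z) x - g‖
          ≤ K * Real.sqrt (2 * (h x - F x z) / μ₂) / (1 - K * η) := by
      intro η hη hη1 hη2
      have hKη : K * η ≤ 1 / 2 := by
        have h1 := mul_le_mul_of_nonneg_left hη1 hK0.le
        rwa [show K * (1 / (2 * K)) = 1 / 2 from by field_simp] at h1
      have hμη : μ₂ * η ≤ 1 / 2 := by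
        have h1 := mul_le_mul_of_nonneg_left hη2 hμ₂.le
        rwa [show μ₂ * (1 / (2 * μ₂)) = 1 / 2 from by field_simp] at h1
      have hKη' : (0:ℝ) < 1 - K * η := by linarith
      have hsq : (0:ℝ) < Real.sqrt (2 * μ₂) := Real.sqrt_pos.2 (by positivity)
      obtain ⟨c, hcdef⟩ : ∃ a, a = (1 - K * η) * Real.sqrt (2 * μ₂) / 2 := ⟨_, rfl⟩
      have hc : 0 < c := by
        rw [hcdef]; exact div_pos (mul_pos hKη' hsq) two_pos
      obtain ⟨step, hstep⟩ : ∃ s : EuclideanSpace ℝ (Fin m) → EuclideanSpace ℝ (Fin m),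
        s = fun w => w + η • gradient (F x) w := ⟨_, rfl⟩
      have hsw : ∀ w, step w - w = η • gradient (F x) w := by
        intro w; simp [hstep]
      have hnw : ∀ w, ‖step w - w‖ = η * ‖gradient (F x) w‖ := by
        intro w
        rw [hsw w, norm_smul, Real.norm_eq_abs, abs_of_nonneg hη.le]
      have dec : ∀ w, h x - F x (step w)
          ≤ (h x - F x w) - η * (1 - K * η) * ‖gradient (F x) w‖ ^ 2 := by
        intro w
        have h1 := (abs_le.1 (dyK w (step w))).1
        have h2 : (inner ℝ (gradient (F x) w) (step w - w) : ℝ)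
            = η * ‖gradient (F x) w‖ ^ 2 := by
          rw [hsw w, real_inner_smul_right, real_inner_self_eq_norm_sq]
        have h3 : ‖step w - w‖ ^ 2 = η ^ 2 * ‖gradient (F x) w‖ ^ 2 := by
          rw [hnw w]; ring
        rw [h2, h3] at h1
        nlinarith [h1]
      have contract : ∀ w, h x - F x (step w) ≤ (1 - μ₂ * η) * (h x - F x w) := by
        intro w
        have h1 := dec w
        have h2 := hPLy x w
        have h3 : 0 ≤ h x - F x w := sub_nonneg.2 (ub x w)
        have h4 : 2 * μ₂ * (h x - F x w) ≤ ‖gradient (F x) w‖ ^ 2 := by linarith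
        have h5 : 0 ≤ η * (1 - K * η) := mul_nonneg hη.le (by linarith)
        have h6 := mul_le_mul_of_nonneg_left h4 h5
        nlinarith [h1, h6, h3, mul_nonneg (mul_nonneg hμ₂.le hη.le) h3,
          mul_nonneg (mul_nonneg (mul_nonneg hμ₂.le hη.le) h3)
            (by linarith : (0:ℝ) ≤ 1 - 2 * (K * η))]
      have sqrtstep : ∀ w, c * ‖step w - w‖
          ≤ Real.sqrt (h x - F x w) - Real.sqrt (h x - F x (step w)) := by
        intro w
        have hA : 0 ≤ h x - F x w := sub_nonneg.2 (ub x w)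
        have hB : 0 ≤ h x - F x (step w) := sub_nonneg.2 (ub x (step w))
        by_cases hG : gradient (F x) w = 0
        · have hz : ‖step w - w‖ = 0 := by rw [hnw w, hG, norm_zero, mul_zero]
          rw [hz, mul_zero]
          have hmono : h x - F x (step w) ≤ h x - F x w := by
            have := dec w
            rw [hG] at this; simp at this; linarith
          exact sub_nonneg.2 (Real.sqrt_le_sqrt hmono)
        · have hGpos : 0 < ‖gradient (F x) w‖ := norm_pos_iff.2 hG
          have hPL : 2 * μ₂ * (h x - F x w) ≤ ‖gradient (F x) w‖ ^ 2 := by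
            linarith [hPLy x w]
          have hdec := dec w
          have hsA : Real.sqrt (h x - F x w) ≤ ‖gradient (F x) w‖ / Real.sqrt (2 * μ₂) := by
            have h9 : h x - F x w ≤ (‖gradient (F x) w‖ / Real.sqrt (2 * μ₂)) ^ 2 := by
              rw [div_pow, Real.sq_sqrt (by positivity : (0:ℝ) ≤ 2 * μ₂),
                le_div_iff₀ (by positivity)]
              nlinarith [hPL]
            calc Real.sqrt (h x - F x w)
                ≤ Real.sqrt ((‖gradient (F x) w‖ / Real.sqrt (2 * μ₂)) ^ 2) :=
                  Real.sqrt_le_sqrt h9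
              _ = ‖gradient (F x) w‖ / Real.sqrt (2 * μ₂) := Real.sqrt_sq (by positivity)
          have hfact : (Real.sqrt (h x - F x w) - Real.sqrt (h x - F x (step w)))
              * (Real.sqrt (h x - F x w) + Real.sqrt (h x - F x (step w)))
              = (h x - F x w) - (h x - F x (step w)) := by
            nlinarith [Real.sq_sqrt hA, Real.sq_sqrt hB]
          have hApos : 0 < h x - F x w := by
            nlinarith [hdec, hB, mul_pos (mul_pos hη hKη') (pow_pos hGpos 2)]
          have hsum_pos : 0 < Real.sqrt (h x - F x w) + Real.sqrt (h x - F x (step w)) := by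
            have := Real.sqrt_pos.2 hApos
            have := Real.sqrt_nonneg (h x - F x (step w))
            linarith
          have hBA : Real.sqrt (h x - F x (step w)) ≤ Real.sqrt (h x - F x w) :=
            Real.sqrt_le_sqrt (by nlinarith [hdec, mul_nonneg (mul_nonneg hη.le hKη'.le) (sq_nonneg ‖gradient (F x) w‖)])
          have hmul : (c * ‖step w - w‖)
              * (Real.sqrt (h x - F x w) + Real.sqrt (h x - F x (step w)))
              ≤ (h x - F x w) - (h x - F x (step w)) := by
            have hs1 : Real.sqrt (h x - F x w) + Real.sqrt (h x - F x (step w))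
                ≤ 2 * (‖gradient (F x) w‖ / Real.sqrt (2 * μ₂)) := by linarith [hsA]
            have hcs : 0 ≤ c * ‖step w - w‖ := mul_nonneg hc.le (norm_nonneg _)
            calc (c * ‖step w - w‖)
                * (Real.sqrt (h x - F x w) + Real.sqrt (h x - F x (step w)))
                ≤ (c * ‖step w - w‖) * (2 * (‖gradient (F x) w‖ / Real.sqrt (2 * μ₂))) :=
                  mul_le_mul_of_nonneg_left hs1 hcs
              _ = η * (1 - K * η) * ‖gradient (F x) w‖ ^ 2 := by
                  rw [hnw w, hcdef]
                  field_simp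
              _ ≤ (h x - F x w) - (h x - F x (step w)) := by linarith [hdec]
          exact le_of_mul_le_mul_right (hmul.trans_eq hfact.symm) hsum_pos
      -- path length bound
      have dist : ∀ k : ℕ, c * ‖step^[k] z - z‖
          ≤ Real.sqrt (h x - F x z) - Real.sqrt (h x - F x (step^[k] z)) := by
        intro k
        induction k with
        | zero => simp
        | succ k ih =>
          rw [Function.iterate_succ_apply']
          have h1 := sqrtstep (step^[k] z)
          have h2 : ‖step (step^[k] z) - z‖
              ≤ ‖step (step^[k] z) - step^[k] z‖ + ‖step^[k] z - z‖ :=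
            norm_sub_le_norm_sub_add_norm_sub _ _ _
          have h3 := mul_le_mul_of_nonneg_left h2 hc.le
          nlinarith [h1, ih, h3]
      have geo : ∀ k : ℕ, h x - F x (step^[k] z) ≤ (1 - μ₂ * η) ^ k * (h x - F x z) := by
        intro k
        induction k with
        | zero => simp
        | succ k ih =>
          rw [Function.iterate_succ_apply']
          have h2 : (0:ℝ) ≤ 1 - μ₂ * η := by linarith
          calc h x - F x (step (step^[k] z))
              ≤ (1 - μ₂ * η) * (h x - F x (step^[k] z)) := contract _
            _ ≤ (1 - μ₂ * η) * ((1 - μ₂ * η) ^ k * (h x - F x z)) :=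
                mul_le_mul_of_nonneg_left ih h2
            _ = (1 - μ₂ * η) ^ (k + 1) * (h x - F x z) := by ring
      have distz : ∀ k : ℕ, ‖step^[k] z - z‖ ≤ Real.sqrt (h x - F x z) / c := by
        intro k
        have h1 := dist k
        have h2 : c * ‖step^[k] z - z‖ ≤ Real.sqrt (h x - F x z) := by
          have := Real.sqrt_nonneg (h x - F x (step^[k] z)); linarith
        rw [le_div_iff₀ hc, mul_comm]
        exact h2
      have sqrt2div : Real.sqrt (2 * (h x - F x z) / μ₂)
          = 2 * Real.sqrt (h x - F x z) / Real.sqrt (2 * μ₂) := by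
        have e : (2 * Real.sqrt (h x - F x z) / Real.sqrt (2 * μ₂)) ^ 2
            = 2 * (h x - F x z) / μ₂ := by
          rw [div_pow, mul_pow, Real.sq_sqrt hφz,
            Real.sq_sqrt (by positivity : (0:ℝ) ≤ 2 * μ₂)]
          field_simp
        rw [← e, Real.sqrt_sq (by positivity)]
      have hBeq : K * Real.sqrt (2 * (h x - F x z) / μ₂) / (1 - K * η)
          = K * (Real.sqrt (h x - F x z) / c) := by
        rw [sqrt2div, hcdef]
        field_simp
      rw [hBeq]
      -- epsilon chase
      refine le_add_all _ _ (fun ε hε => ?_)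
      have hKsc : 0 ≤ K * (Real.sqrt (h x - F x z) / c) :=
        mul_nonneg hK0.le (div_nonneg (Real.sqrt_nonneg _) hc.le)
      obtain ⟨M, hM⟩ : ∃ a, a = ‖gradient (fun x' => F x' z) x - g‖ + K * (Real.sqrt (h x - F x z) / c) := ⟨_, rfl⟩
      have hM0 : 0 ≤ M := by rw [hM]; exact add_nonneg (norm_nonneg _) hKsc
      obtain ⟨C2, hC2⟩ : ∃ a, a = 1 / 2 * K ^ 2 + 2 * μ₂ * K := ⟨_, rfl⟩
      have hC2pos : 0 < C2 := by rw [hC2]; positivity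
      have hden : (0:ℝ) < C2 * M ^ 2 + 1 := by
        nlinarith only [mul_nonneg hC2pos.le (sq_nonneg M)]
      obtain ⟨t, htdef⟩ : ∃ a, a = (μ₂ * ε ^ 2 / 3) / (C2 * M ^ 2 + 1) := ⟨_, rfl⟩
      have htpos : 0 < t := by rw [htdef]; exact div_pos (by positivity) hden
      have hq1 : (0:ℝ) ≤ 1 - μ₂ * η := by linarith
      have hq2 : 1 - μ₂ * η < 1 := by linarith only [mul_pos hμ₂ hη]
      have tends : Filter.Tendsto (fun k : ℕ => (1 - μ₂ * η) ^ k * (h x - F x z))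
          Filter.atTop (nhds 0) := by
        have h1 := tendsto_pow_atTop_nhds_zero_of_lt_one hq1 hq2
        simpa using h1.mul_const (h x - F x z)
      have hKM1 : (0:ℝ) < K * M + 1 := by linarith only [mul_nonneg hK0.le hM0]
      obtain ⟨X, hX⟩ : ∃ a, a = μ₂ * ε ^ 2 / (3 * (K * M + 1)) := ⟨_, rfl⟩
      have hXpos : 0 < X := by rw [hX]; exact div_pos (by positivity) (by positivity)
      obtain ⟨δ1, hδ1⟩ : ∃ a, a = t * (μ₂ * ε ^ 2 / 3) / (2 * K) := ⟨_, rfl⟩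
      obtain ⟨δ2, hδ2⟩ : ∃ a, a = X ^ 2 / (4 * K) := ⟨_, rfl⟩
      have hδ1pos : 0 < δ1 := by rw [hδ1]; exact div_pos (by positivity) (by positivity)
      have hδ2pos : 0 < δ2 := by rw [hδ2]; exact div_pos (pow_pos hXpos 2) (by positivity)
      have hmin : (0:ℝ) < min δ1 δ2 := lt_min hδ1pos hδ2pos
      obtain ⟨k, hk⟩ := (tends.eventually (gt_mem_nhds hmin)).exists
      obtain ⟨w, hw⟩ : ∃ a, a = step^[k] z := ⟨_, rfl⟩
      have hφk0 : 0 ≤ h x - F x w := sub_nonneg.2 (ub x w)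
      have hφk : h x - F x w < min δ1 δ2 := by rw [hw]; exact lt_of_le_of_lt (geo k) hk
      have hGk2 : ‖gradient (F x) w‖ ^ 2 ≤ 4 * K * (h x - F x w) := gb w
      have hDkM : ‖gradient (fun x' => F x' w) x - g‖ ≤ M := by
        have h1 := crossxK w z
        have h2 : ‖w - z‖ ≤ Real.sqrt (h x - F x z) / c := by rw [hw]; exact distz k
        have h3 : ‖gradient (fun x' => F x' w) x - g‖
            ≤ ‖gradient (fun x' => F x' w) x - gradient (fun x' => F x' z) x‖
              + ‖gradient (fun x' => F x' z) x - g‖ :=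
          norm_sub_le_norm_sub_add_norm_sub _ _ _
        have h4 := h1.trans (mul_le_mul_of_nonneg_left h2 hK0.le)
        rw [hM]
        linarith
      have hp2 := p2 w t htpos
      have b1 : 1 / 2 * ‖gradient (F x) w‖ ^ 2 ≤ t * (μ₂ * ε ^ 2 / 3) := by
        have h1 : h x - F x w ≤ δ1 := le_of_lt (lt_of_lt_of_le hφk (min_le_left _ _))
        rw [hδ1] at h1
        have h2 : 4 * K * (h x - F x w) ≤ 4 * K * (t * (μ₂ * ε ^ 2 / 3) / (2 * K)) :=
          mul_le_mul_of_nonneg_left h1 (by positivity)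
        have h3 : 4 * K * (t * (μ₂ * ε ^ 2 / 3) / (2 * K)) = 2 * (t * (μ₂ * ε ^ 2 / 3)) := by
          field_simp; ring
        linarith only [hGk2, h2, h3]
      have hGkX : ‖gradient (F x) w‖ ≤ X := by
        have h1 : h x - F x w ≤ δ2 := le_of_lt (lt_of_lt_of_le hφk (min_le_right _ _))
        have e : 4 * K * δ2 = X ^ 2 := by rw [hδ2]; field_simp
        have h2 : ‖gradient (F x) w‖ ^ 2 ≤ X ^ 2 := by
          linarith only [hGk2, mul_le_mul_of_nonneg_left h1 (by positivity : (0:ℝ) ≤ 4 * K), e]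
        have h3 := Real.sqrt_le_sqrt h2
        rwa [Real.sqrt_sq (norm_nonneg _), Real.sqrt_sq hXpos.le] at h3
      have b2 : ‖gradient (F x) w‖ * (K * (t * ‖gradient (fun x' => F x' w) x - g‖))
          ≤ t * (μ₂ * ε ^ 2 / 3) := by
        have h1 : ‖gradient (F x) w‖ * (K * (t * ‖gradient (fun x' => F x' w) x - g‖))
            ≤ X * (K * (t * M)) := by
          have hi : K * (t * ‖gradient (fun x' => F x' w) x - g‖) ≤ K * (t * M) :=
            mul_le_mul_of_nonneg_left (mul_le_mul_of_nonneg_left hDkM htpos.le) hK0.le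
          exact mul_le_mul hGkX hi (by positivity) hXpos.le
        have h2 : X * (K * (t * M)) ≤ t * (μ₂ * ε ^ 2 / 3) := by
          rw [hX]
          rw [div_mul_eq_mul_div, div_le_iff₀ (by positivity : (0:ℝ) < 3 * (K * M + 1))]
          nlinarith only [mul_nonneg (mul_nonneg htpos.le hμ₂.le) (sq_nonneg ε)]
        linarith
      have b3 : C2 * (t ^ 2 * ‖gradient (fun x' => F x' w) x - g‖ ^ 2)
          ≤ t * (μ₂ * ε ^ 2 / 3) := by
        have h1 : C2 * t * M ^ 2 ≤ μ₂ * ε ^ 2 / 3 := by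
          rw [htdef]
          have e : C2 * ((μ₂ * ε ^ 2 / 3) / (C2 * M ^ 2 + 1)) * M ^ 2
              = (μ₂ * ε ^ 2 / 3) * (C2 * M ^ 2 / (C2 * M ^ 2 + 1)) := by
            field_simp
          rw [e]
          have h2 : C2 * M ^ 2 / (C2 * M ^ 2 + 1) ≤ 1 := by
            rw [div_le_one hden]; linarith
          calc (μ₂ * ε ^ 2 / 3) * (C2 * M ^ 2 / (C2 * M ^ 2 + 1))
              ≤ (μ₂ * ε ^ 2 / 3) * 1 := mul_le_mul_of_nonneg_left h2 (by positivity)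
            _ = μ₂ * ε ^ 2 / 3 := mul_one _
        have h2 : ‖gradient (fun x' => F x' w) x - g‖ ^ 2 ≤ M ^ 2 := by
          nlinarith only [hDkM, norm_nonneg (gradient (fun x' => F x' w) x - g), hM0]
        calc C2 * (t ^ 2 * ‖gradient (fun x' => F x' w) x - g‖ ^ 2)
            = t * (C2 * t * ‖gradient (fun x' => F x' w) x - g‖ ^ 2) := by ring
          _ ≤ t * (C2 * t * M ^ 2) := by
              refine mul_le_mul_of_nonneg_left ?_ htpos.le
              exact mul_le_mul_of_nonneg_left h2 (mul_nonneg hC2pos.le htpos.le)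
          _ ≤ t * (μ₂ * ε ^ 2 / 3) := mul_le_mul_of_nonneg_left h1 htpos.le
      have hDk2 : μ₂ * (t * ‖gradient (fun x' => F x' w) x - g‖ ^ 2) ≤ t * (μ₂ * ε ^ 2) := by
        calc μ₂ * (t * ‖gradient (fun x' => F x' w) x - g‖ ^ 2)
            ≤ 1 / 2 * ‖gradient (F x) w‖ ^ 2
              + ‖gradient (F x) w‖ * (K * (t * ‖gradient (fun x' => F x' w) x - g‖))
              + C2 * (t ^ 2 * ‖gradient (fun x' => F x' w) x - g‖ ^ 2) := by
              rw [hC2]; exact hp2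
          _ ≤ t * (μ₂ * ε ^ 2 / 3) + t * (μ₂ * ε ^ 2 / 3) + t * (μ₂ * ε ^ 2 / 3) := by
              linarith only [b1, b2, b3]
          _ = t * (μ₂ * ε ^ 2) := by ring
      have hDk : ‖gradient (fun x' => F x' w) x - g‖ ≤ ε := by
        have h1 : ‖gradient (fun x' => F x' w) x - g‖ ^ 2 ≤ ε ^ 2 := by
          nlinarith only [hDk2, mul_pos hμ₂ htpos]
        have h3 := Real.sqrt_le_sqrt h1
        rwa [Real.sqrt_sq (norm_nonneg _), Real.sqrt_sq hε.le] at h3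
      have tri : ‖gradient (fun x' => F x' z) x - g‖
          ≤ ‖gradient (fun x' => F x' z) x - gradient (fun x' => F x' w) x‖
            + ‖gradient (fun x' => F x' w) x - g‖ :=
        norm_sub_le_norm_sub_add_norm_sub _ _ _
      have h1 := crossxK z w
      have h2 : ‖z - w‖ ≤ Real.sqrt (h x - F x z) / c := by
        rw [norm_sub_rev, hw]; exact distz k
      have h4 := h1.trans (mul_le_mul_of_nonneg_left h2 hK0.le)
      linarith only [tri, h4, hDk]
    -- ============ let the step size go to zero ============
    have hB0 : 0 ≤ K * Real.sqrt (2 * (h x - F x z) / μ₂) :=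
      mul_nonneg hK0.le (Real.sqrt_nonneg _)
    refine le_add_all _ _ (fun ε hε => ?_)
    obtain ⟨B, hBdef⟩ : ∃ a, a = K * Real.sqrt (2 * (h x - F x z) / μ₂) := ⟨_, rfl⟩
    obtain ⟨η, hηdef⟩ : ∃ a, a = min (min (1 / (2 * K)) (1 / (2 * μ₂))) (ε / (2 * K * (B + 1))) := ⟨_, rfl⟩
    have hB1 : (0:ℝ) < B + 1 := by rw [hBdef]; linarith [hB0]
    have hη0 : 0 < η := by
      rw [hηdef]
      exact lt_min (lt_min (by positivity) (by positivity))
        (div_pos hε (by positivity))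
    have hη1 : η ≤ 1 / (2 * K) := by
      rw [hηdef]; exact le_trans (min_le_left _ _) (min_le_left _ _)
    have hη2 : η ≤ 1 / (2 * μ₂) := by
      rw [hηdef]; exact le_trans (min_le_left _ _) (min_le_right _ _)
    have hη3 : η ≤ ε / (2 * K * (B + 1)) := by rw [hηdef]; exact min_le_right _ _
    have h1 := key2 η hη0 hη1 hη2
    have hKη : K * η ≤ 1 / 2 := by
      have h2 := mul_le_mul_of_nonneg_left hη1 hK0.le
      rwa [show K * (1 / (2 * K)) = 1 / 2 from by field_simp] at h2
    have hKη' : (0:ℝ) < 1 - K * η := by linarith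
    have h2 : B / (1 - K * η) ≤ B + ε := by
      rw [div_le_iff₀ hKη']
      have h3 : K * η * (B + 1) ≤ ε / 2 := by
        have h5 := mul_le_mul_of_nonneg_left hη3 (by positivity : (0:ℝ) ≤ K * (B + 1))
        have e : K * (B + 1) * (ε / (2 * K * (B + 1))) = ε / 2 := by
          field_simp
        calc K * η * (B + 1) = K * (B + 1) * η := by ring
          _ ≤ K * (B + 1) * (ε / (2 * K * (B + 1))) := h5
          _ = ε / 2 := e
      have h4 : K * η * ε ≤ 1 / 2 * ε := mul_le_mul_of_nonneg_right hKη hε.le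
      have h6 : 0 ≤ K * η := mul_nonneg hK0.le hη0.le
      linarith only [h3, h4, h6, hB0]
    rw [← hBdef] at h1 ⊢
    exact h1.trans h2
  -- ================= DANSKIN =================
  set K1 : ℝ := |L| + 1 with hK1def
  have hK1pos : (0:ℝ) < K1 := by positivity
  have hK1L : |L| ≤ K1 := by simp [hK1def]
  set Cq : ℝ := |L| + K1 ^ 2 / μ₂ with hCqdef
  have hCq : 0 ≤ Cq := by positivity
  have qb : ∀ x', |h x' - h x - (inner ℝ g (x' - x) : ℝ)| ≤ Cq * ‖x' - x‖ ^ 2 := by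
    intro x'
    obtain ⟨m', hm'⟩ := (hmax x').1
    set v := x' - x with hvdef
    -- lower bound
    have hlow0 := abs_le.1 (dxA m0 x x')
    have hlow : h x + (inner ℝ g v : ℝ) - |L| * ‖v‖ ^ 2 ≤ h x' := by
      have h1 : F x' m0 ≤ h x' := ub x' m0
      have := hlow0.1
      rw [hm0] at this
      simp only [← hgdef, ← hvdef] at this
      linarith
    -- upper bound
    have hup0 := abs_le.1 (dxA m' x x')
    have hub1 : F x m' ≤ h x := ub x m'
    have inner_split : (inner ℝ (gradient (fun x'' => F x'' m') x) v : ℝ)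
        ≤ (inner ℝ g v : ℝ) + ‖gradient (fun x'' => F x'' m') x - g‖ * ‖v‖ := by
      have h2 : (inner ℝ (gradient (fun x'' => F x'' m') x) v : ℝ) - (inner ℝ g v : ℝ)
          = (inner ℝ (gradient (fun x'' => F x'' m') x - g) v : ℝ) := by
        rw [inner_sub_left]
      nlinarith [real_inner_le_norm (gradient (fun x'' => F x'' m') x - g) v,
        h2.ge, h2.le]
    have hgy0 : gradient (F x') m' = 0 := gmax0 x' m' hm'
    have h5 : ‖gradient (F x) m'‖ ≤ K1 * ‖v‖ := by
      have := crossy x x' m' m'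
      simp only [sub_self, norm_zero, add_zero, hgy0, sub_zero] at this
      refine this.trans ?_
      rw [show ‖x - x'‖ = ‖v‖ by rw [hvdef, norm_sub_rev]]
      have : (0:ℝ) ≤ ‖v‖ := norm_nonneg _
      nlinarith [abs_nonneg L]
    have h6 : h x - F x m' ≤ K1 ^ 2 * ‖v‖ ^ 2 / (2 * μ₂) := by
      have hpl := hPLy x m'
      have h7 : ‖gradient (F x) m'‖ ^ 2 ≤ (K1 * ‖v‖) ^ 2 := by
        nlinarith [norm_nonneg (gradient (F x) m')]
      rw [le_div_iff₀ (by positivity : (0:ℝ) < 2 * μ₂)]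
      nlinarith
    have bnd : ‖gradient (fun x'' => F x'' m') x - g‖ ≤ K1 ^ 2 * ‖v‖ / μ₂ := by
      have := key K1 hK1pos hK1L m'
      refine this.trans ?_
      have h8 : 2 * (h x - F x m') / μ₂ ≤ (K1 * ‖v‖ / μ₂) ^ 2 := by
        rw [show (K1 * ‖v‖ / μ₂) ^ 2 = K1 ^ 2 * ‖v‖ ^ 2 / μ₂ ^ 2 from by ring,
          div_le_div_iff₀ hμ₂ (by positivity)]
        have h6' := (le_div_iff₀ (by positivity : (0:ℝ) < 2 * μ₂)).1 h6
        nlinarith [mul_le_mul_of_nonneg_right h6' hμ₂.le]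
      calc K1 * Real.sqrt (2 * (h x - F x m') / μ₂)
          ≤ K1 * Real.sqrt ((K1 * ‖v‖ / μ₂) ^ 2) :=
            mul_le_mul_of_nonneg_left (Real.sqrt_le_sqrt h8) hK1pos.le
        _ = K1 * (K1 * ‖v‖ / μ₂) := by
            rw [Real.sqrt_sq (by positivity)]
        _ = K1 ^ 2 * ‖v‖ / μ₂ := by ring
    have hup : h x' ≤ h x + (inner ℝ g v : ℝ) + (|L| * ‖v‖ ^ 2 + K1 ^ 2 / μ₂ * ‖v‖ ^ 2) := by
      have h9 : F x' m' ≤ F x m' + (inner ℝ (gradient (fun x'' => F x'' m') x) v : ℝ)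
          + |L| * ‖v‖ ^ 2 := by
        have := hup0.2; simp only [← hvdef] at this; linarith
      have h10 : ‖gradient (fun x'' => F x'' m') x - g‖ * ‖v‖ ≤ K1 ^ 2 * ‖v‖ ^ 2 / μ₂ := by
        calc ‖gradient (fun x'' => F x'' m') x - g‖ * ‖v‖
            ≤ (K1 ^ 2 * ‖v‖ / μ₂) * ‖v‖ := by gcongr
          _ = K1 ^ 2 * ‖v‖ ^ 2 / μ₂ := by ring
      have hEq : K1 ^ 2 * ‖v‖ ^ 2 / μ₂ = K1 ^ 2 / μ₂ * ‖v‖ ^ 2 := by ring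
      linarith [hm'.ge, hm'.le]
    have hCv : (0:ℝ) ≤ K1 ^ 2 / μ₂ * ‖v‖ ^ 2 := by positivity
    have hEq2 : Cq * ‖v‖ ^ 2 = |L| * ‖v‖ ^ 2 + K1 ^ 2 / μ₂ * ‖v‖ ^ 2 := by rw [hCqdef]; ring
    rw [abs_le]; constructor
    · rw [hEq2]; linarith
    · rw [hEq2]; linarith
  have danskin : HasGradientAt h g x := by
    rw [hasGradientAt_iff_isLittleO, Asymptotics.isLittleO_iff]
    intro c hc
    have hr : (0:ℝ) < c / (Cq + 1) := by positivity
    filter_upwards [Metric.closedBall_mem_nhds x hr] with x' hx'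
    have hd : ‖x' - x‖ ≤ c / (Cq + 1) := by
      rw [← dist_eq_norm]; exact Metric.mem_closedBall.1 hx'
    have := qb x'
    rw [Real.norm_eq_abs]
    refine this.trans ?_
    have hn : (0:ℝ) ≤ ‖x' - x‖ := norm_nonneg _
    calc Cq * ‖x' - x‖ ^ 2 = (Cq * ‖x' - x‖) * ‖x' - x‖ := by ring
      _ ≤ c * ‖x' - x‖ := by
          refine mul_le_mul_of_nonneg_right ?_ hn
          have h11 : Cq / (Cq + 1) ≤ 1 := (div_le_one (by positivity)).2 (by linarith)
          calc Cq * ‖x' - x‖ ≤ Cq * (c / (Cq + 1)) := by gcongr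
            _ = c * (Cq / (Cq + 1)) := by ring
            _ ≤ c * 1 := mul_le_mul_of_nonneg_left h11 hc.le
            _ = c := mul_one c
      _ = c * ‖x' - x‖ := rfl
  have grad_h : gradient h x = g := danskin.gradient
  -- ================= CONCLUSION =================
  rw [grad_h]
  have φy0 : 0 ≤ h x - F x y := sub_nonneg.2 (ub x y)
  have s0 : 0 ≤ 2 * (h x - F x y) / μ₂ := by positivity
  have main : ‖gradient (fun x' => F x' y) x - g‖ ≤ |L| * Real.sqrt (2 * (h x - F x y) / μ₂) := by
    refine le_of_forall_pos_le_add fun ε hε => ?_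
    set S := Real.sqrt (2 * (h x - F x y) / μ₂) with hS
    have hSn : 0 ≤ S := Real.sqrt_nonneg _
    have hδ : (0:ℝ) < ε / (S + 1) := by positivity
    have := key (|L| + ε / (S + 1)) (by positivity) (by linarith [abs_nonneg L, hδ]) y
    refine this.trans ?_
    rw [← hS]
    have : (ε / (S + 1)) * S ≤ ε := by
      rw [div_mul_eq_mul_div, div_le_iff₀ (by positivity)]
      nlinarith
    nlinarith
  calc ‖gradient (fun x' => F x' y) x - g‖ ^ 2
      ≤ (|L| * Real.sqrt (2 * (h x - F x y) / μ₂)) ^ 2 :=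
        pow_le_pow_left₀ (norm_nonneg _) main 2
    _ = 2 * L ^ 2 / μ₂ * (h x - F x y) := by
        rw [mul_pow, Real.sq_sqrt s0, sq_abs]; ring
end

section
/- Let F : ℝ^n × ℝ^m → ℝ be differentiable and L-smooth (Assumption 1), and suppose for every x the function y ↦ −F(x,y) satisfies the PL condition with constant μ₂ > 0 and argmax_y F(x,y) is nonempty with finite optimal value. Let h(x) = max_y F(x,y). Then for all x, y, ‖∇_yF(x,y)‖² ≤ (2L²/μ₂)·(h(x) − F(x,y)). -/
lemma ftc_line {E : Type*} [NormedAddCommGroup E] [InnerProductSpace ℝ E] [CompleteSpace E]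
    (f : E → ℝ) (hf : Differentiable ℝ f)
    (hgc : Continuous (fun z => gradient f z)) (y d : E) :
    f (y + d) - f y = ∫ t in (0:ℝ)..1, (inner ℝ (gradient f (y + t • d)) d : ℝ) := by
  have hderiv : ∀ t ∈ Set.uIcc (0:ℝ) 1,
      HasDerivAt (fun t : ℝ => f (y + t • d)) (inner ℝ (gradient f (y + t • d)) d : ℝ) t := by
    intro t _
    have h1 : HasDerivAt (fun t : ℝ => y + t • d) d t := by
      simpa using ((hasDerivAt_id t).smul_const d).const_add y
    have h2 : HasFDerivAt f ((InnerProductSpace.toDual ℝ E) (gradient f (y + t • d)))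
        (y + t • d) := (hf (y + t • d)).hasGradientAt
    have h3 := h2.comp_hasDerivAt t h1
    simp only [InnerProductSpace.toDual_apply_apply] at h3
    exact h3
  have hint : IntervalIntegrable (fun t : ℝ => (inner ℝ (gradient f (y + t • d)) d : ℝ))
      MeasureTheory.volume 0 1 := by
    apply Continuous.intervalIntegrable
    exact (hgc.comp (by continuity)).inner continuous_const
  have := intervalIntegral.integral_eq_sub_of_hasDerivAt hderiv hint
  simpa using this.symm


/-- Under `L`-smoothness of `F` and the `μ₂`-PL condition for `y ↦ −F(x,y)`
(with the max over `y` attained, with value `h(x)`),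
`‖∇_yF(x,y)‖² ≤ (2L²/μ₂)(h(x) − F(x,y))`. -/
theorem grad_y_bound (n m : ℕ)
    (F : EuclideanSpace ℝ (Fin n) → EuclideanSpace ℝ (Fin m) → ℝ)
    (L μ₂ : ℝ) (hμ₂ : 0 < μ₂)
    (hdiff : Differentiable ℝ fun p : EuclideanSpace ℝ (Fin n) × EuclideanSpace ℝ (Fin m) =>
      F p.1 p.2)
    (hsmoothx : ∀ x₁ x₂ y₁ y₂,
      ‖gradient (fun x => F x y₁) x₁ - gradient (fun x => F x y₂) x₂‖
        ≤ L * (‖x₁ - x₂‖ + ‖y₁ - y₂‖))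
    (hsmoothy : ∀ x₁ x₂ y₁ y₂,
      ‖gradient (F x₁) y₁ - gradient (F x₂) y₂‖ ≤ L * (‖x₁ - x₂‖ + ‖y₁ - y₂‖))
    (h : EuclideanSpace ℝ (Fin n) → ℝ)
    (hmax : ∀ x, IsGreatest (Set.range (F x)) (h x))
    (hPLy : ∀ x y, μ₂ * (h x - F x y) ≤ (1 / 2) * ‖gradient (F x) y‖ ^ 2)
    (x : EuclideanSpace ℝ (Fin n)) (y : EuclideanSpace ℝ (Fin m)) :
    ‖gradient (F x) y‖ ^ 2 ≤ (2 * L ^ 2 / μ₂) * (h x - F x y) := by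
  set g := gradient (F x) y with hgdef
  have hFx : Differentiable ℝ (F x) := fun z =>
    (hdiff (x, z)).comp z ((differentiableAt_const x).prodMk differentiableAt_id)
  have hLip : ∀ z₁ z₂ : EuclideanSpace ℝ (Fin m),
      ‖gradient (F x) z₁ - gradient (F x) z₂‖ ≤ L * ‖z₁ - z₂‖ := by
    intro z₁ z₂; simpa using hsmoothy x x z₁ z₂
  have hgc : Continuous (fun z => gradient (F x) z) := by
    have : LipschitzWith (Real.toNNReal L) (fun z => gradient (F x) z) := by
      apply LipschitzWith.of_dist_le_mul
      intro z₁ z₂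
      rw [dist_eq_norm, dist_eq_norm]
      calc ‖gradient (F x) z₁ - gradient (F x) z₂‖ ≤ L * ‖z₁ - z₂‖ := hLip z₁ z₂
        _ ≤ Real.toNNReal L * ‖z₁ - z₂‖ := by
            gcongr ?_ * _
            exact Real.le_coe_toNNReal L
    exact this.continuous
  have hub : ∀ z, F x z ≤ h x := fun z => (hmax x).2 ⟨z, rfl⟩
  have hge : 0 ≤ h x - F x y := sub_nonneg.2 (hub y)
  rcases le_or_gt L 0 with hL | hL
  · -- gradient is constant, must be zero
    have hconst : ∀ z, gradient (F x) z = g := by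
      intro z
      have h1 := hLip z y
      have h2 : L * ‖z - y‖ ≤ 0 := mul_nonpos_of_nonpos_of_nonneg hL (norm_nonneg _)
      have : ‖gradient (F x) z - g‖ ≤ 0 := le_trans h1 h2
      exact sub_eq_zero.mp (norm_le_zero_iff.mp this)
    have hval : ∀ t : ℝ, F x (y + t • g) - F x y = t * ‖g‖ ^ 2 := by
      intro t
      rw [ftc_line (F x) hFx hgc y (t • g)]
      have hinner : ∀ s : ℝ,
          (inner ℝ (gradient (F x) (y + s • (t • g))) (t • g) : ℝ) = t * ‖g‖ ^ 2 := by
        intro s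
        rw [hconst, real_inner_smul_right, real_inner_self_eq_norm_sq]
      simp only [hinner]
      simp
    have hg0 : ‖g‖ ^ 2 = 0 := by
      by_contra h0
      have hpos : 0 < ‖g‖ ^ 2 := lt_of_le_of_ne (sq_nonneg _) (Ne.symm h0)
      have h2 := hval ((h x - F x y + 1) / ‖g‖ ^ 2)
      have h3 : F x (y + ((h x - F x y + 1) / ‖g‖ ^ 2) • g) ≤ h x := hub _
      rw [div_mul_cancel₀ _ (ne_of_gt hpos)] at h2
      linarith
    have hrhs : 0 ≤ 2 * L ^ 2 / μ₂ * (h x - F x y) :=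
      mul_nonneg (div_nonneg (by positivity) hμ₂.le) hge
    linarith
  · -- L > 0
    set d := L⁻¹ • g with hddef
    have hnd : ‖d‖ = L⁻¹ * ‖g‖ := by
      rw [hddef, norm_smul, Real.norm_eq_abs, abs_of_pos (inv_pos.2 hL)]
    have hptwise : ∀ t ∈ Set.Icc (0:ℝ) 1,
        (1 - t) * (‖g‖ ^ 2 / L) ≤ (inner ℝ (gradient (F x) (y + t • d)) d : ℝ) := by
      intro t ht
      have hgd : (inner ℝ g d : ℝ) = ‖g‖ ^ 2 / L := by
        rw [hddef, real_inner_smul_right, real_inner_self_eq_norm_sq]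
        ring
      have hdist : ‖gradient (F x) (y + t • d) - g‖ ≤ t * ‖g‖ := by
        have hl := hLip (y + t • d) y
        simp only [add_sub_cancel_left] at hl
        calc ‖gradient (F x) (y + t • d) - g‖ ≤ L * ‖t • d‖ := hl
          _ = L * (|t| * ‖d‖) := by rw [norm_smul, Real.norm_eq_abs]
          _ = t * ‖g‖ := by
              rw [abs_of_nonneg ht.1, hnd]
              field_simp
      have habs : |(inner ℝ (gradient (F x) (y + t • d) - g) d : ℝ)| ≤ t * ‖g‖ * ‖d‖ :=
        le_trans (abs_real_inner_le_norm _ _)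
          (mul_le_mul_of_nonneg_right hdist (norm_nonneg _))
      have hd' : t * ‖g‖ * ‖d‖ = t * (‖g‖ ^ 2 / L) := by
        rw [hnd]; field_simp
      have hsplit : (inner ℝ (gradient (F x) (y + t • d)) d : ℝ)
          = (inner ℝ g d : ℝ) + (inner ℝ (gradient (F x) (y + t • d) - g) d : ℝ) := by
        rw [inner_sub_left]; ring
      rw [hsplit, hgd]
      have hneg := neg_abs_le ((inner ℝ (gradient (F x) (y + t • d) - g) d : ℝ))
      rw [hd'] at habs
      linarith
    have hkey : ‖g‖ ^ 2 / (2 * L) ≤ h x - F x y := by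
      have hle : (∫ t in (0:ℝ)..1, (1 - t) * (‖g‖ ^ 2 / L)) ≤
          ∫ t in (0:ℝ)..1, (inner ℝ (gradient (F x) (y + t • d)) d : ℝ) := by
        apply intervalIntegral.integral_mono_on zero_le_one
        · exact Continuous.intervalIntegrable
            ((continuous_const.sub continuous_id).mul continuous_const) _ _
        · exact ((hgc.comp
            (continuous_const.add (continuous_id.smul continuous_const))).inner
            continuous_const).intervalIntegrable _ _
        · exact hptwise
      have hI : (∫ t in (0:ℝ)..1, (1 - t) * (‖g‖ ^ 2 / L)) = ‖g‖ ^ 2 / (2 * L) := by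
        rw [intervalIntegral.integral_mul_const,
          intervalIntegral.integral_sub intervalIntegrable_const
            intervalIntegral.intervalIntegrable_id]
        simp [integral_id]
        ring
      rw [← ftc_line (F x) hFx hgc y d] at hle
      rw [hI] at hle
      have := hub (y + d)
      linarith
    have hk2 : ‖g‖ ^ 2 ≤ 2 * L * (h x - F x y) := by
      have h2L : (0:ℝ) < 2 * L := by linarith
      have := (div_le_iff₀ h2L).mp hkey
      linarith
    rcases eq_or_lt_of_le hge with heq | hpos
    · rw [← heq, mul_zero]
      rw [← heq, mul_zero] at hk2
      exact hk2
    · have hPL := hPLy x y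
      have hμL : μ₂ ≤ L := by nlinarith
      rw [div_mul_eq_mul_div, le_div_iff₀ hμ₂]
      nlinarith [mul_le_mul_of_nonneg_right hk2 hμ₂.le,
        mul_le_mul_of_nonneg_right (mul_le_mul_of_nonneg_right hμL hpos.le) hL.le]
end
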